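/- arXiv:2601.11209 — 10 statements merged into one kernel-verified Lean document; each statement's English description precedes it below -/
import Mathlib

section
/- Let c : [0,∞) → ℝ. There exists a probability measure μ on [0,∞) with ∫ x dμ(x) = 1 such that c(K) = ∫ (x − K)⁺ dμ(x) for all K ≥ 0, if and only if: (1) c is nonincreasing; (2) c is convex; (3) c(0) = 1; (4) lim_{K→∞} c(K) = 0; and (5) the right derivative of c at 0 is ≥ −1. Moreover, if the right derivative of c at 0 equals −1, then μ can be chosen with μ({0}) = 0, i.e., the representing random variable is strictly positive almost surely. -/
open MeasureTheory Filter Set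

set_option linter.unusedSectionVars false
set_option linter.unusedVariables false


lemma bl_forward (c : ℝ → ℝ) (μ : Measure ℝ) (hP : IsProbabilityMeasure μ)
    (hneg : μ (Iio 0) = 0) (hmean : (∫ x, x ∂μ) = 1)
    (hrep : ∀ K, 0 ≤ K → c K = ∫ x, max (x - K) 0 ∂μ) :
    AntitoneOn c (Ici 0) ∧ ConvexOn ℝ (Ici 0) c ∧ c 0 = 1 ∧
      Tendsto c atTop (nhds 0) ∧
      ∃ L, -1 ≤ L ∧
        Tendsto (fun ε => (c (0 + ε) - c 0) / ε) (nhdsWithin 0 (Ioi 0)) (nhds L) := by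
  have hae : ∀ᵐ x ∂μ, 0 ≤ x := by
    rw [ae_iff]
    convert hneg using 2
    ext x; simp [Iio]
  have hint : Integrable (fun x => x) μ := by
    by_contra h
    rw [integral_undef h] at hmean
    norm_num at hmean
  have hintK : ∀ K : ℝ, 0 ≤ K → Integrable (fun x => max (x - K) 0) μ := by
    intro K hK
    refine hint.mono ?_ ?_
    · exact (continuous_id.sub continuous_const).max continuous_const |>.aestronglyMeasurable
    · filter_upwards [hae] with x hx
      rw [Real.norm_eq_abs, Real.norm_eq_abs, abs_of_nonneg (le_max_right _ _),
        abs_of_nonneg hx]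
      rcases le_total (x - K) 0 with h | h
      · simpa [max_eq_right h] using hx
      · rw [max_eq_left h]; linarith
  have hanti : AntitoneOn c (Ici 0) := by
    intro a ha b hb hab
    rw [hrep a ha, hrep b hb]
    refine integral_mono (hintK b hb) (hintK a ha) ?_
    intro x
    exact max_le_max (by simp; linarith) le_rfl
  have hconv : ConvexOn ℝ (Ici 0) c := by
    refine ⟨convex_Ici 0, ?_⟩
    intro a ha b hb p q hp hq hpq
    have ha' : (0:ℝ) ≤ a := ha
    have hb' : (0:ℝ) ≤ b := hb
    have hab : (0:ℝ) ≤ p • a + q • b := by simp only [smul_eq_mul]; positivity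
    have hI := integral_add ((hintK a ha).smul p) ((hintK b hb).smul q)
    simp only [Pi.add_apply, Pi.smul_apply, integral_smul] at hI
    rw [hrep a ha, hrep b hb, hrep _ hab, ← hI]
    refine integral_mono (hintK _ hab)
      (by have := ((hintK a ha).smul p).add ((hintK b hb).smul q); exact this) ?_
    intro x
    simp only [smul_eq_mul]
    apply max_le
    · nlinarith [le_max_left (x - a) 0, le_max_left (x - b) 0,
        le_max_right (x - a) 0, le_max_right (x - b) 0]
    · positivity
  have hc0 : c 0 = 1 := by
    rw [hrep 0 le_rfl, ← hmean]
    refine integral_congr_ae ?_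
    filter_upwards [hae] with x hx
    simp [max_eq_left, hx]
  refine ⟨hanti, hconv, hc0, ?_, ?_⟩
  · -- tendsto at top
    have key : Tendsto (fun K => ∫ x, max (x - K) 0 ∂μ) atTop (nhds (∫ _x, (0:ℝ) ∂μ)) := by
      refine tendsto_integral_filter_of_dominated_convergence (fun x => max x 0) ?_ ?_ ?_ ?_
      · exact Eventually.of_forall fun K =>
          ((continuous_id.sub continuous_const).max continuous_const).aestronglyMeasurable
      · filter_upwards [eventually_ge_atTop (0:ℝ)] with K hK
        filter_upwards [hae] with x hx
        rw [Real.norm_eq_abs, abs_of_nonneg (le_max_right (x-K) 0)]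
        apply max_le_max _ le_rfl
        simp only [sub_le_iff_le_add]; linarith
      · refine hint.mono (continuous_id.max continuous_const).aestronglyMeasurable ?_
        filter_upwards [hae] with x hx
        rw [Real.norm_eq_abs, Real.norm_eq_abs, abs_of_nonneg (le_max_right _ _),
          abs_of_nonneg hx, max_eq_left hx]
      · refine Eventually.of_forall fun x => ?_
        refine Tendsto.congr' ?_ tendsto_const_nhds
        filter_upwards [eventually_ge_atTop x] with K hK
        simp [max_eq_right, sub_nonpos.mpr hK]
    rw [integral_zero] at key
    refine Tendsto.congr' ?_ key
    filter_upwards [eventually_ge_atTop (0:ℝ)] with K hK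
    exact (hrep K hK).symm
  · -- right derivative
    set g : ℝ → ℝ := (Ioi (0:ℝ)).indicator (fun _ => (-1:ℝ)) with hg
    have hg_int : Integrable g μ := (integrable_const (-1:ℝ)).indicator measurableSet_Ioi
    have hgval : ∫ x, g x ∂μ = -(μ (Ioi 0)).toReal := by
      rw [hg, integral_indicator_const _ measurableSet_Ioi]; simp [measureReal_def]
    refine ⟨∫ x, g x ∂μ, ?_, ?_⟩
    · rw [hgval]
      have h1 : μ (Ioi 0) ≤ 1 := prob_le_one
      have := ENNReal.toReal_mono (by norm_num) h1
      simp only [ENNReal.toReal_one] at this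
      linarith
    · have key : Tendsto (fun ε => ∫ x, (max (x - ε) 0 - max x 0) / ε ∂μ)
          (nhdsWithin 0 (Ioi 0)) (nhds (∫ x, g x ∂μ)) := by
        refine tendsto_integral_filter_of_dominated_convergence (fun _ => 1) ?_ ?_ ?_ ?_
        · refine Eventually.of_forall fun ε => ?_
          exact ((((continuous_id.sub continuous_const).max continuous_const).sub
            (continuous_id.max continuous_const)).div_const ε).aestronglyMeasurable
        · filter_upwards [self_mem_nhdsWithin] with ε (hε : 0 < ε)
          filter_upwards [hae] with x hx
          rw [Real.norm_eq_abs, abs_div, abs_of_pos hε, div_le_one hε, abs_le]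
          constructor
          · rcases le_total x ε with h | h
            · rw [max_eq_right (by linarith), max_eq_left hx]; linarith
            · rw [max_eq_left (by linarith), max_eq_left hx]; linarith
          · have : max (x - ε) 0 ≤ max x 0 := max_le_max (by linarith) le_rfl
            linarith
        · exact integrable_const 1
        · filter_upwards [hae] with x hx
          rcases eq_or_lt_of_le hx with h | h
          · refine Tendsto.congr' ?_ tendsto_const_nhds
            filter_upwards [self_mem_nhdsWithin] with ε (hε : 0 < ε)
            rw [hg, ← h]
            simp only [indicator, mem_Ioi, lt_irrefl, if_false, zero_sub]
            rw [max_eq_right (neg_nonpos.mpr hε.le), max_self, sub_zero, zero_div]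
          · refine Tendsto.congr' ?_ tendsto_const_nhds
            filter_upwards [Ioo_mem_nhdsGT_of_mem (by exact ⟨le_rfl, h⟩ :
              (0:ℝ) ∈ Ico 0 x)] with ε hε
            obtain ⟨h1, h2⟩ := hε
            rw [hg, indicator_of_mem (show x ∈ Ioi (0:ℝ) from h), max_eq_left hx,
              max_eq_left (by linarith : (0:ℝ) ≤ x - ε),
              show x - ε - x = -ε by ring, neg_div, div_self h1.ne']
      refine Tendsto.congr' ?_ key
      filter_upwards [self_mem_nhdsWithin] with ε (hε : 0 < ε)
      rw [zero_add, hrep ε hε.le, hrep 0 le_rfl]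
      rw [← integral_sub (hintK ε hε.le) (hintK 0 le_rfl), ← integral_div]
      simp

section Construct
variable {c : ℝ → ℝ} {L : ℝ}

/-- The right-derivative candidate. -/
noncomputable def rd (c : ℝ → ℝ) (t : ℝ) : ℝ := sInf (slope c t '' Ioi t)

variable (hA : AntitoneOn c (Ici 0)) (hC : ConvexOn ℝ (Ici 0) c)
  (h0 : c 0 = 1) (htop : Tendsto c atTop (nhds 0)) (hL1 : -1 ≤ L)
  (hL : Tendsto (slope c 0) (nhdsWithin 0 (Ioi 0)) (nhds L))

section S
include hC

-- slope monotone in second argument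
lemma slope_mono2 {t u v : ℝ} (ht : 0 ≤ t) (hu : t < u) (huv : u ≤ v) :
    slope c t u ≤ slope c t v := by
  rw [slope_def_field, slope_def_field]
  exact hC.secant_mono ht (ht.trans hu.le) (ht.trans (hu.le.trans huv))
    hu.ne' (hu.trans_le huv).ne' huv

-- slope monotone in first argument
lemma slope_mono1 {t t' s : ℝ} (ht : 0 ≤ t) (htt : t ≤ t') (hts : t' < s) :
    slope c t s ≤ slope c t' s := by
  rw [slope_comm, slope_comm c t']
  rw [slope_def_field, slope_def_field]
  exact hC.secant_mono (ht.trans (htt.trans hts.le)) ht (ht.trans htt)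
    (htt.trans_lt hts).ne (ne_of_lt hts) htt

-- three chord
lemma slope_three {x y s : ℝ} (hx : 0 ≤ x) (hxy : x < y) (hys : y < s) :
    slope c x y ≤ slope c y s := by
  rw [slope_comm, slope_def_field, slope_def_field]
  exact hC.secant_mono (hx.trans hxy.le) hx (hx.trans (hxy.trans hys).le)
    hxy.ne hys.ne' (hxy.trans hys).le
end S

include hA hC in
lemma slope_nonpos {t s : ℝ} (ht : 0 ≤ t) (hts : t < s) : slope c t s ≤ 0 := by
  rw [slope_def_field]
  apply div_nonpos_of_nonpos_of_nonneg
  · have := hA ht (ht.trans hts.le : s ∈ Ici 0) hts.le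
    linarith
  · linarith

include hC hL in
lemma slope_lb {t s : ℝ} (ht : 0 ≤ t) (hts : t < s) : L ≤ slope c t s := by
  have hs : (0:ℝ) < s := ht.trans_lt hts
  refine le_of_tendsto hL ?_
  filter_upwards [Ioo_mem_nhdsGT_of_mem (show (0:ℝ) ∈ Ico 0 s from ⟨le_rfl, hs⟩)] with u hu
  obtain ⟨hu0, hus⟩ := hu
  calc slope c 0 u ≤ slope c 0 s := slope_mono2 hC le_rfl hu0 hus.le
    _ ≤ slope c t s := slope_mono1 hC le_rfl ht hts

include hC hL in
lemma rd_bddBelow {t : ℝ} (ht : 0 ≤ t) : BddBelow (slope c t '' Ioi t) := by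
  refine ⟨L, fun y hy => ?_⟩
  obtain ⟨s, hs, rfl⟩ := hy
  exact slope_lb hC hL ht hs

lemma rd_le_slope (hC : ConvexOn ℝ (Ici 0) c) (hL : Tendsto (slope c 0) (nhdsWithin 0 (Ioi 0)) (nhds L))
    {t s : ℝ} (ht : 0 ≤ t) (hts : t < s) : rd c t ≤ slope c t s :=
  csInf_le (rd_bddBelow hC hL ht) (mem_image_of_mem _ hts)

include hC hL in
lemma le_rd {t : ℝ} (ht : 0 ≤ t) : L ≤ rd c t :=
  le_csInf (Nonempty.image _ (nonempty_Ioi)) (fun b hb => by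
    obtain ⟨s, hs, rfl⟩ := hb; exact slope_lb hC hL ht hs)

include hA hC hL in
lemma rd_nonpos {t : ℝ} (ht : 0 ≤ t) : rd c t ≤ 0 :=
  (rd_le_slope hC hL ht (lt_add_one t)).trans (slope_nonpos hA hC ht (lt_add_one t))

include hC hL in
lemma slope_le_rd {x y : ℝ} (hx : 0 ≤ x) (hxy : x < y) : slope c x y ≤ rd c y :=
  le_csInf (Nonempty.image _ (nonempty_Ioi)) (fun b hb => by
    obtain ⟨s, hs, rfl⟩ := hb
    exact slope_three hC hx hxy hs)

include hC hL in
lemma rd_mono : MonotoneOn (rd c) (Ici 0) := by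
  intro t ht t' ht' htt
  rcases eq_or_lt_of_le htt with rfl | h
  · exact le_rfl
  refine le_csInf (Nonempty.image _ (nonempty_Ioi)) (fun b hb => ?_)
  obtain ⟨s, hs, rfl⟩ := hb
  exact (rd_le_slope hC hL ht (h.trans hs)).trans (slope_mono1 hC ht htt hs)

include hC hL in
lemma rd_grad_le {x y : ℝ} (hx : 0 ≤ x) (hxy : x ≤ y) : rd c x * (y - x) ≤ c y - c x := by
  rcases eq_or_lt_of_le hxy with rfl | h
  · simp
  have h1 : rd c x ≤ slope c x y := rd_le_slope hC hL hx h
  have h2 : slope c x y * (y - x) = c y - c x := by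
    rw [slope_def_field, div_mul_cancel₀ _ (sub_ne_zero.mpr h.ne')]
  nlinarith [sub_pos.mpr h]

include hC hL in
lemma le_rd_grad {x y : ℝ} (hx : 0 ≤ x) (hxy : x ≤ y) : c y - c x ≤ rd c y * (y - x) := by
  rcases eq_or_lt_of_le hxy with rfl | h
  · simp
  have h1 : slope c x y ≤ rd c y := slope_le_rd hC hL hx h
  have h2 : slope c x y * (y - x) = c y - c x := by
    rw [slope_def_field, div_mul_cancel₀ _ (sub_ne_zero.mpr h.ne')]
  nlinarith [sub_pos.mpr h]

include hC hL in
lemma slope_tendsto_rd {t : ℝ} (ht : 0 ≤ t) :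
    Tendsto (slope c t) (nhdsWithin t (Ioi t)) (nhds (rd c t)) :=
  MonotoneOn.tendsto_nhdsGT
    (fun u hu v hv huv => slope_mono2 hC ht hu huv) (rd_bddBelow hC hL ht)

include hC hL in
lemma rd_zero : rd c 0 = L :=
  tendsto_nhds_unique (slope_tendsto_rd hC hL le_rfl) hL

omit hL1 in
include hA hC hL in
lemma c_lip {x y : ℝ} (hx : 0 ≤ x) (hxy : x ≤ y) : |c y - c x| ≤ -L * (y - x) := by
  rcases eq_or_lt_of_le hxy with rfl | h
  · simp
  have h1 : L ≤ slope c x y := slope_lb hC hL hx h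
  have h2 : slope c x y ≤ 0 := slope_nonpos hA hC hx h
  have h3 : slope c x y * (y - x) = c y - c x := by
    rw [slope_def_field, div_mul_cancel₀ _ (sub_ne_zero.mpr h.ne')]
  have h4 : (0:ℝ) < y - x := sub_pos.mpr h
  rw [abs_of_nonpos (by nlinarith)]
  nlinarith

include hA hC hL in
lemma c_contOn : ContinuousOn c (Ici 0) := by
  have key : LipschitzOnWith (Real.toNNReal (-L)) c (Ici 0) := by
    refine LipschitzOnWith.of_dist_le_mul (fun x hx y hy => ?_)
    have hLc : (Real.toNNReal (-L) : ℝ) = max (-L) 0 := by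
      simp [Real.toNNReal, Real.coe_toNNReal']
    rw [Real.dist_eq, Real.dist_eq, hLc]
    rcases le_total x y with h | h
    · calc |c x - c y| = |c y - c x| := abs_sub_comm _ _
        _ ≤ -L * (y - x) := c_lip hA hC hL hx h
        _ ≤ max (-L) 0 * |x - y| := by
            rw [abs_sub_comm, abs_of_nonneg (sub_nonneg.mpr h)]
            apply mul_le_mul_of_nonneg_right (le_max_left _ _) (sub_nonneg.mpr h)
    · calc |c x - c y| ≤ -L * (x - y) := c_lip hA hC hL hy h
        _ ≤ max (-L) 0 * |x - y| := by
            rw [abs_of_nonneg (sub_nonneg.mpr h)]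
            apply mul_le_mul_of_nonneg_right (le_max_left _ _) (sub_nonneg.mpr h)
  exact key.continuousOn

include hA hC hL in
lemma ftc {a b : ℝ} (ha : 0 ≤ a) (hab : a ≤ b) :
    ∫ t in a..b, rd c t = c b - c a := by
  refine intervalIntegral.integral_eq_sub_of_hasDeriv_right_of_le hab
    ((c_contOn hA hC hL).mono (fun z hz => ha.trans hz.1 : Icc a b ⊆ Ici 0)) ?_ ?_
  · intro x hx
    have hx0 : (0:ℝ) ≤ x := ha.trans hx.1.le
    rw [hasDerivWithinAt_iff_tendsto_slope,
      show Ioi x \ {x} = Ioi x from diff_singleton_eq_self (by simp)]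
    exact slope_tendsto_rd hC hL hx0
  · refine MonotoneOn.intervalIntegrable ?_
    rw [uIcc_of_le hab]
    intro u hu v hv huv
    exact rd_mono hC hL (ha.trans hu.1) (ha.trans hv.1) huv

include hA hC hL htop in
lemma rd_tendsto_top : Tendsto (rd c) atTop (nhds 0) := by
  have hlow : Tendsto (fun t => c t - c (t - 1)) atTop (nhds 0) := by
    have h2 : Tendsto (fun t : ℝ => c (t - 1)) atTop (nhds 0) :=
      htop.comp (tendsto_atTop_add_const_right _ (-1) tendsto_id)
    simpa using htop.sub h2
  refine tendsto_of_tendsto_of_tendsto_of_le_of_le' hlow tendsto_const_nhds ?_ ?_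
  · filter_upwards [eventually_ge_atTop (1:ℝ)] with t ht
    have := le_rd_grad hC hL (by linarith : (0:ℝ) ≤ t - 1) (by linarith : t - 1 ≤ t)
    simpa using this
  · filter_upwards [eventually_ge_atTop (0:ℝ)] with t ht
    exact rd_nonpos hA hC hL ht

include hA hC hL in
lemma rd_right_cont {x : ℝ} (hx : 0 ≤ x) :
    Tendsto (rd c) (nhdsWithin x (Ioi x)) (nhds (rd c x)) := by
  have mono' : MonotoneOn (rd c) (Ioi x) := fun u hu v hv huv =>
    rd_mono hC hL (hx.trans (le_of_lt hu)) (hx.trans (le_of_lt hv)) huv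
  have bdd : BddBelow (rd c '' Ioi x) := by
    refine ⟨L, fun y hy => ?_⟩
    obtain ⟨s, hs, rfl⟩ := hy
    exact le_rd hC hL (hx.trans hs.le)
  have h1 : Tendsto (rd c) (nhdsWithin x (Ioi x)) (nhds (sInf (rd c '' Ioi x))) :=
    MonotoneOn.tendsto_nhdsGT mono' bdd
  have heq : sInf (rd c '' Ioi x) = rd c x := by
    apply le_antisymm
    · refine le_csInf (Nonempty.image _ nonempty_Ioi) (fun b hb => ?_)
      obtain ⟨s, hs, rfl⟩ := hb
      have hxs : x < s := hs
      -- sInf (rd c '' Ioi x) ≤ slope c x s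
      have hccont : Tendsto c (nhdsWithin x (Ioi x)) (nhds (c x)) :=
        ((c_contOn hA hC hL) x hx).mono (fun u (hu : u ∈ Ioi x) => (hx.trans hu.le : u ∈ Ici 0))
      have hscont : Tendsto (fun u => slope c u s) (nhdsWithin x (Ioi x)) (nhds (slope c x s)) := by
        have h1 : Tendsto (fun u => (c s - c u) / (s - u)) (nhdsWithin x (Ioi x))
            (nhds ((c s - c x) / (s - x))) :=
          (tendsto_const_nhds.sub hccont).div
            (tendsto_const_nhds.sub (tendsto_id.mono_left nhdsWithin_le_nhds))
            (sub_ne_zero.mpr hxs.ne')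
        simpa only [slope_def_field] using h1
      refine ge_of_tendsto hscont ?_
      filter_upwards [Ioo_mem_nhdsGT_of_mem (show x ∈ Ico x s from ⟨le_rfl, hxs⟩)] with u hu
      exact le_trans (csInf_le bdd (mem_image_of_mem _ hu.1))
        (rd_le_slope hC hL (hx.trans hu.1.le) hu.2)
    · refine le_csInf (Nonempty.image _ nonempty_Ioi) (fun b hb => ?_)
      obtain ⟨s, hs, rfl⟩ := hb
      exact rd_mono hC hL hx (hx.trans hs.le) hs.le
  rwa [heq] at h1

/-- the candidate CDF -/
noncomputable def cdf (c : ℝ → ℝ) : ℝ → ℝ := fun t => if t < 0 then 0 else 1 + rd c t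

include hC hL hL1 in
lemma cdf_mono : Monotone (cdf c) := by
  intro t t' h
  unfold cdf
  by_cases h1 : t' < 0
  · rw [if_pos (lt_of_le_of_lt h h1), if_pos h1]
  · rw [if_neg h1]
    push_neg at h1
    by_cases h2 : t < 0
    · rw [if_pos h2]
      have := le_rd hC hL h1
      linarith
    · push_neg at h2
      rw [if_neg (not_lt.mpr h2)]
      have := rd_mono hC hL h2 h1 h
      linarith

include hA hC hL in
lemma cdf_rc : ∀ x, ContinuousWithinAt (cdf c) (Ici x) x := by
  intro x
  by_cases hx : x < 0
  · have hev : cdf c =ᶠ[nhds x] (fun _ => (0:ℝ)) := by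
      filter_upwards [Iio_mem_nhds hx] with u hu
      simp [cdf, show u < 0 from hu]
    refine (continuousWithinAt_const (b := (0:ℝ))).congr_of_eventuallyEq
      (hev.filter_mono nhdsWithin_le_nhds) (by simp [cdf, hx])
  · push_neg at hx
    rw [← continuousWithinAt_Ioi_iff_Ici]
    have key : Tendsto (fun u => 1 + rd c u) (nhdsWithin x (Ioi x)) (nhds (1 + rd c x)) :=
      tendsto_const_nhds.add (rd_right_cont hA hC hL hx)
    have heq : ∀ᶠ u in nhdsWithin x (Ioi x), (1 + rd c u) = cdf c u := by
      filter_upwards [self_mem_nhdsWithin] with u (hu : x < u)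
      simp [cdf, not_lt.mpr (hx.trans hu.le)]
    have h2 := key.congr' heq
    show Tendsto (cdf c) (nhdsWithin x (Ioi x)) (nhds (cdf c x))
    rw [show cdf c x = 1 + rd c x from by simp [cdf, not_lt.mpr hx]]
    exact h2

/-- the candidate CDF as a Stieltjes function -/
noncomputable def stF (hA : AntitoneOn c (Ici 0)) (hC : ConvexOn ℝ (Ici 0) c) (hL1 : -1 ≤ L)
    (hL : Tendsto (slope c 0) (nhdsWithin 0 (Ioi 0)) (nhds L)) : StieltjesFunction ℝ :=
  ⟨cdf c, cdf_mono hC hL1 hL, cdf_rc hA hC hL⟩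

include hA hC hL1 hL in
lemma stF_apply (t : ℝ) : stF hA hC hL1 hL t = if t < 0 then 0 else 1 + rd c t := rfl

include hA hC hL1 hL in
lemma stF_bot : Tendsto (stF hA hC hL1 hL) atBot (nhds 0) := by
  refine Tendsto.congr' ?_ tendsto_const_nhds
  filter_upwards [eventually_lt_atBot (0:ℝ)] with t ht
  simp [stF_apply, ht]

include hA hC htop hL1 hL in
lemma stF_top : Tendsto (stF hA hC hL1 hL) atTop (nhds 1) := by
  have key : Tendsto (fun t => 1 + rd c t) atTop (nhds 1) := by
    have := (tendsto_const_nhds : Tendsto (fun _ : ℝ => (1:ℝ)) atTop (nhds 1)).add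
      (rd_tendsto_top hA hC htop hL)
    simpa using this
  refine Tendsto.congr' ?_ key
  filter_upwards [eventually_ge_atTop (0:ℝ)] with t ht
  simp [stF_apply, not_lt.mpr ht]

include hA hC hL1 hL in
lemma cdf_mem_Icc {t : ℝ} : stF hA hC hL1 hL t ∈ Icc (0:ℝ) 1 := by
  rw [stF_apply]
  by_cases ht : t < 0
  · simp [ht]
  · push_neg at ht
    rw [if_neg (not_lt.mpr ht)]
    have h1 := le_rd hC hL ht
    have h2 := rd_nonpos hA hC hL ht
    constructor <;> linarith

include hA hC htop hL1 hL in
lemma stF_isProb : IsProbabilityMeasure (stF hA hC hL1 hL).measure := by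
  constructor
  rw [StieltjesFunction.measure_univ _ (stF_bot hA hC hL1 hL) (stF_top hA hC htop hL1 hL)]
  norm_num

include hA hC hL1 hL in
lemma stF_leftLim0 : Function.leftLim (stF hA hC hL1 hL : ℝ → ℝ) 0 = 0 := by
  apply leftLim_eq_of_tendsto (f := (stF hA hC hL1 hL : ℝ → ℝ))
  refine Tendsto.congr' ?_ tendsto_const_nhds
  filter_upwards [self_mem_nhdsWithin] with u (hu : u < 0)
  simp [stF_apply, hu]

include hA hC hL1 hL in
lemma stF_Iic (x : ℝ) :
    (stF hA hC hL1 hL).measure (Iic x) = ENNReal.ofReal (stF hA hC hL1 hL x) := by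
  rw [StieltjesFunction.measure_Iic _ (stF_bot hA hC hL1 hL), sub_zero]

include hA hC htop hL1 hL in
lemma stF_Ioi (x : ℝ) :
    (stF hA hC hL1 hL).measure (Ioi x) = ENNReal.ofReal (1 - stF hA hC hL1 hL x) := by
  haveI hP := stF_isProb hA hC htop hL1 hL
  have h1 : Ioi x = (Iic x)ᶜ := by ext u; simp
  rw [h1, measure_compl measurableSet_Iic (measure_ne_top _ _), stF_Iic hA hC hL1 hL,
    measure_univ, ENNReal.ofReal_sub _ (cdf_mem_Icc hA hC hL1 hL).1, ENNReal.ofReal_one]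

include hA hC hL1 hL in
lemma stF_Iio0 : (stF hA hC hL1 hL).measure (Iio 0) = 0 := by
  have h1 : Iio (0:ℝ) = Iic 0 \ {0} := by ext u; simp [lt_iff_le_and_ne]
  rw [h1, measure_diff (by simp) (measurableSet_singleton 0).nullMeasurableSet
      (by rw [StieltjesFunction.measure_singleton]; exact ENNReal.ofReal_ne_top),
    stF_Iic hA hC hL1 hL, StieltjesFunction.measure_singleton, stF_leftLim0 hA hC hL1 hL, sub_zero,
    tsub_self]

include hA hC hL1 hL in
lemma stF_singleton0 :
    (stF hA hC hL1 hL).measure {0} = ENNReal.ofReal (1 + L) := by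
  rw [StieltjesFunction.measure_singleton, stF_leftLim0 hA hC hL1 hL, sub_zero, stF_apply,
    if_neg (lt_irrefl 0), rd_zero hC hL]

include hA htop in
lemma c_nonneg {K : ℝ} (hK : 0 ≤ K) : 0 ≤ c K := by
  refine le_of_tendsto htop ?_
  filter_upwards [eventually_ge_atTop K] with t ht
  exact hA hK (hK.trans ht : t ∈ Ici 0) ht

include hA hC hL1 hL in
lemma lint_Ioc {K b : ℝ} (hK : 0 ≤ K) (hKb : K ≤ b) :
    ∫⁻ s in Ioc K b, ENNReal.ofReal (1 - stF hA hC hL1 hL s) = ENNReal.ofReal (c K - c b) := by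
  have hii : IntervalIntegrable (fun s => -(rd c s)) volume K b := by
    refine (MonotoneOn.intervalIntegrable ?_).neg
    rw [uIcc_of_le hKb]
    intro u hu v hv huv
    exact rd_mono hC hL (hK.trans hu.1) (hK.trans hv.1) huv
  have hInt : IntegrableOn (fun s => -(rd c s)) (Ioc K b) volume := by
    rw [intervalIntegrable_iff, uIoc_of_le hKb] at hii
    exact hii
  have hval : ∫ s in Ioc K b, -(rd c s) = c K - c b := by
    rw [← intervalIntegral.integral_of_le hKb, intervalIntegral.integral_neg,
      ftc hA hC hL hK hKb]
    ring
  have step1 : ∫⁻ s in Ioc K b, ENNReal.ofReal (1 - stF hA hC hL1 hL s)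
      = ∫⁻ s in Ioc K b, ENNReal.ofReal (-(rd c s)) := by
    refine setLIntegral_congr_fun measurableSet_Ioc (fun s hs => ?_)
    rw [stF_apply, if_neg (not_lt.mpr (hK.trans hs.1.le))]
    ring_nf
  rw [step1, ← hval, ← ofReal_integral_eq_lintegral_ofReal hInt]
  refine (ae_restrict_of_forall_mem measurableSet_Ioc fun s hs => ?_)
  simp only [Pi.zero_apply]
  exact neg_nonneg.mpr (rd_nonpos hA hC hL (hK.trans hs.1.le))

include hA hC htop hL1 hL in
lemma lint_Ioi {K : ℝ} (hK : 0 ≤ K) :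
    ∫⁻ s in Ioi K, ENNReal.ofReal (1 - stF hA hC hL1 hL s) = ENNReal.ofReal (c K) := by
  set gE : ℝ → ENNReal := fun s => ENNReal.ofReal (1 - stF hA hC hL1 hL s) with hgE
  have hgEm : Measurable gE :=
    (measurable_const.sub (stF hA hC hL1 hL).mono.measurable).ennreal_ofReal
  have hptwise : (Ioi K).indicator gE
      = fun s => ⨆ n : ℕ, (Ioc K (K + (n + 1))).indicator gE s := by
    funext s
    by_cases hs : s ∈ Ioi K
    · rw [indicator_of_mem hs]
      refine le_antisymm ?_ (iSup_le fun n => indicator_le_self _ _ s)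
      obtain ⟨n, hn⟩ := exists_nat_gt (s - K)
      refine le_trans ?_ (le_iSup _ n)
      rw [indicator_of_mem (show s ∈ Ioc K (K + (n + 1)) from ⟨hs, by push_cast; linarith⟩)]
    · rw [indicator_of_notMem hs]
      symm
      simp only [ENNReal.iSup_eq_zero]
      intro n
      exact indicator_of_notMem (fun h => hs h.1) _
  have hmono : Monotone (fun n : ℕ => (Ioc K (K + (n + 1) : ℝ)).indicator gE) := by
    intro m n h
    refine indicator_le_indicator_of_subset (Ioc_subset_Ioc_right ?_) (fun a => zero_le)
    have : (m:ℝ) ≤ (n:ℝ) := Nat.cast_le.mpr h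
    linarith
  calc ∫⁻ s in Ioi K, gE s = ∫⁻ s, (Ioi K).indicator gE s := (lintegral_indicator measurableSet_Ioi _)
    |>.symm
  _ = ∫⁻ s, ⨆ n : ℕ, (Ioc K (K + (n + 1) : ℝ)).indicator gE s := by rw [hptwise]
  _ = ⨆ n : ℕ, ∫⁻ s, (Ioc K (K + (n + 1) : ℝ)).indicator gE s :=
      lintegral_iSup (fun n => hgEm.indicator measurableSet_Ioc) hmono
  _ = ⨆ n : ℕ, ENNReal.ofReal (c K - c (K + (n + 1))) := by
      refine iSup_congr fun n => ?_
      rw [lintegral_indicator measurableSet_Ioc, lint_Ioc hA hC hL1 hL hK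
        (by have : (0:ℝ) ≤ (n:ℝ) := Nat.cast_nonneg n; linarith)]
  _ = ENNReal.ofReal (c K) := by
      have hm2 : Monotone (fun n : ℕ => ENNReal.ofReal (c K - c (K + (n + 1) : ℝ))) := by
        intro m n h
        refine ENNReal.ofReal_le_ofReal ?_
        have hm0 : (0:ℝ) ≤ (m:ℝ) := Nat.cast_nonneg m
        have hn0 : (0:ℝ) ≤ (n:ℝ) := Nat.cast_nonneg n
        have hmn : (m:ℝ) ≤ (n:ℝ) := Nat.cast_le.mpr h
        have : c (K + (n + 1) : ℝ) ≤ c (K + (m + 1) : ℝ) := by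
          refine hA (mem_Ici.mpr (by linarith)) (mem_Ici.mpr (by linarith)) (by linarith)
        linarith
      have ht2 : Tendsto (fun n : ℕ => ENNReal.ofReal (c K - c (K + (n + 1) : ℝ))) atTop
          (nhds (ENNReal.ofReal (c K - 0))) := by
        refine ENNReal.tendsto_ofReal (tendsto_const_nhds.sub (htop.comp ?_))
        refine tendsto_atTop_add_const_left atTop K ?_
        exact tendsto_atTop_add_const_right atTop 1 tendsto_natCast_atTop_atTop
      have := tendsto_nhds_unique (tendsto_atTop_iSup hm2) ht2
      rw [this, sub_zero]

include hA hC htop hL1 hL in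
lemma lint_payoff {K : ℝ} (hK : 0 ≤ K) :
    ∫⁻ x, ENNReal.ofReal (max (x - K) 0) ∂(stF hA hC hL1 hL).measure = ENNReal.ofReal (c K) := by
  set μ := (stF hA hC hL1 hL).measure with hμ
  rw [lintegral_eq_lintegral_meas_lt (f := fun x => max (x - K) 0) μ
    (Eventually.of_forall fun x => le_max_right _ _) (by fun_prop)]
  have step1 : ∫⁻ t in Ioi 0, μ {a | t < max (a - K) 0}
      = ∫⁻ t in Ioi (0:ℝ), ENNReal.ofReal (1 - stF hA hC hL1 hL (K + t)) := by
    refine setLIntegral_congr_fun measurableSet_Ioi (fun t ht => ?_)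
    have hset : {a : ℝ | t < max (a - K) 0} = Ioi (K + t) := by
      ext a
      simp only [mem_setOf_eq, mem_Ioi]
      constructor
      · intro h
        rcases le_or_gt (a - K) 0 with h1 | h1
        · rw [max_eq_right h1] at h; exact absurd h (not_lt.mpr (le_of_lt ht))
        · rw [max_eq_left h1.le] at h; linarith
      · intro h
        calc t < a - K := by linarith
        _ ≤ max (a - K) 0 := le_max_left _ _
    rw [hset, stF_Ioi hA hC htop hL1 hL]
  rw [step1]
  have step2 : ∫⁻ t in Ioi (0:ℝ), ENNReal.ofReal (1 - stF hA hC hL1 hL (K + t))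
      = ∫⁻ s in Ioi K, ENNReal.ofReal (1 - stF hA hC hL1 hL s) := by
    have hpre : (fun x => K + x) ⁻¹' (Ioi K) = Ioi (0:ℝ) := by
      ext x; simp
    rw [← hpre]
    exact (measurePreserving_add_left volume K).setLIntegral_comp_preimage_emb
      (measurableEmbedding_addLeft K) (fun s => ENNReal.ofReal (1 - stF hA hC hL1 hL s)) (Ioi K)
  rw [step2, lint_Ioi hA hC htop hL1 hL hK]

include hA hC htop hL1 hL in
lemma payoff_integrable {K : ℝ} (hK : 0 ≤ K) :
    Integrable (fun x => max (x - K) 0) (stF hA hC hL1 hL).measure := by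
  refine ⟨(by fun_prop : Continuous fun x : ℝ => max (x - K) 0).aestronglyMeasurable, ?_⟩
  rw [hasFiniteIntegral_iff_ofReal (f := fun x => max (x - K) 0)
    (Eventually.of_forall fun x => le_max_right _ _), lint_payoff hA hC htop hL1 hL hK]
  exact ENNReal.ofReal_lt_top

include hA hC htop hL1 hL in
lemma payoff_eq {K : ℝ} (hK : 0 ≤ K) :
    c K = ∫ x, max (x - K) 0 ∂(stF hA hC hL1 hL).measure := by
  rw [integral_eq_lintegral_of_nonneg_ae (f := fun x => max (x - K) 0)
    (Eventually.of_forall fun x => le_max_right _ _)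
    (by fun_prop : Continuous fun x : ℝ => max (x - K) 0).aestronglyMeasurable,
    lint_payoff hA hC htop hL1 hL hK, ENNReal.toReal_ofReal (c_nonneg hA htop hK)]

include hA hC h0 htop hL1 hL in
lemma mean_eq : ∫ x, x ∂(stF hA hC hL1 hL).measure = 1 := by
  have hae : ∀ᵐ x ∂(stF hA hC hL1 hL).measure, 0 ≤ x := by
    rw [ae_iff]
    convert stF_Iio0 hA hC hL1 hL using 2
    ext x; simp [Iio]
  have h1 : ∫ x, x ∂(stF hA hC hL1 hL).measure = ∫ x, max (x - 0) 0 ∂(stF hA hC hL1 hL).measure := by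
    refine integral_congr_ae ?_
    filter_upwards [hae] with x hx
    simp [max_eq_left, hx]
  rw [h1, ← payoff_eq hA hC htop hL1 hL le_rfl, h0]

end Construct

/-- A function `c` on `[0,∞)` is representable as
`c(K) = ∫ (x-K)⁺ dμ(x)` for a probability measure `μ` on `[0,∞)` with unit mean
iff it is nonincreasing, convex, `c(0)=1`, tends to `0` at `∞`, and has right
derivative at `0` at least `-1`. Moreover if the right derivative at `0` equals `-1`,
then `μ` can be chosen with `μ({0}) = 0`. -/
theorem stmt_1 (c : ℝ → ℝ) :
    ((∃ μ : Measure ℝ, IsProbabilityMeasure μ ∧ μ (Iio 0) = 0 ∧ (∫ x, x ∂μ) = 1 ∧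
        ∀ K, 0 ≤ K → c K = ∫ x, max (x - K) 0 ∂μ) ↔
      (AntitoneOn c (Ici 0) ∧ ConvexOn ℝ (Ici 0) c ∧ c 0 = 1 ∧
        Tendsto c atTop (nhds 0) ∧
        ∃ L, -1 ≤ L ∧
          Tendsto (fun ε => (c (0 + ε) - c 0) / ε) (nhdsWithin 0 (Ioi 0)) (nhds L))) ∧
    ((AntitoneOn c (Ici 0) ∧ ConvexOn ℝ (Ici 0) c ∧ c 0 = 1 ∧
        Tendsto c atTop (nhds 0) ∧
        Tendsto (fun ε => (c (0 + ε) - c 0) / ε) (nhdsWithin 0 (Ioi 0)) (nhds (-1))) →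
      ∃ μ : Measure ℝ, IsProbabilityMeasure μ ∧ μ (Iio 0) = 0 ∧ μ {0} = 0 ∧
        (∫ x, x ∂μ) = 1 ∧ ∀ K, 0 ≤ K → c K = ∫ x, max (x - K) 0 ∂μ) := by
  have hconv : ∀ {L : ℝ}, Tendsto (fun ε => (c (0 + ε) - c 0) / ε) (nhdsWithin 0 (Ioi 0)) (nhds L)
      ↔ Tendsto (slope c 0) (nhdsWithin 0 (Ioi 0)) (nhds L) := by
    intro L
    have h : (fun ε => (c (0 + ε) - c 0) / ε) = slope c 0 := by
      funext ε; rw [slope_def_field, zero_add, sub_zero]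
    rw [h]
  constructor
  · constructor
    · rintro ⟨μ, hP, hneg, hmean, hrep⟩
      exact bl_forward c μ hP hneg hmean hrep
    · rintro ⟨hA, hC, h0, htop, L, hL1, hL⟩
      rw [hconv] at hL
      exact ⟨(stF hA hC hL1 hL).measure, stF_isProb hA hC htop hL1 hL, stF_Iio0 hA hC hL1 hL,
        mean_eq hA hC h0 htop hL1 hL, fun K hK => payoff_eq hA hC htop hL1 hL hK⟩
  · rintro ⟨hA, hC, h0, htop, hL⟩
    rw [hconv] at hL
    have hL1 : (-1:ℝ) ≤ -1 := le_rfl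
    refine ⟨(stF hA hC hL1 hL).measure, stF_isProb hA hC htop hL1 hL, stF_Iio0 hA hC hL1 hL, ?_,
      mean_eq hA hC h0 htop hL1 hL, fun K hK => payoff_eq hA hC htop hL1 hL hK⟩
    rw [stF_singleton0 hA hC hL1 hL]
    norm_num
end

section
/- Let f : [0,∞) → ℝ be convex with finite right derivative f′₊(0) at 0, and let f′₊ denote its right derivative, which is nondecreasing and right-continuous on [0,∞). Let μ be the Lebesgue–Stieltjes measure on (0,∞) induced by f′₊, i.e., μ((a,b]) = f′₊(b) − f′₊(a) for 0 ≤ a < b. Then for every x ≥ 0, f(x) = f(0) + f′₊(0)·x + ∫_{(0,∞)} (x − K)⁺ dμ(K). -/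
open MeasureTheory Filter Set

/-- representation of a convex function via its right derivative `g`
(a nondecreasing right-continuous function, encoded as a `StieltjesFunction`) and
the Lebesgue–Stieltjes measure `g.measure` it induces on `(0,∞)`:
`f x = f 0 + g 0 * x + ∫_{(0,∞)} (x - K)⁺ dg.measure(K)` for `x ≥ 0`. -/
theorem stmt_2 (f : ℝ → ℝ) (g : StieltjesFunction ℝ)
    (hf : ConvexOn ℝ (Ici 0) f)
    (hg : ∀ x, 0 ≤ x →
      Tendsto (fun ε => (f (x + ε) - f x) / ε) (nhdsWithin 0 (Ioi 0)) (nhds (g x))) :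
    ∀ x, 0 ≤ x →
      f x = f 0 + g 0 * x + ∫ K in Ioi (0 : ℝ), max (x - K) 0 ∂g.measure := by
  intro x hx
  -- right derivative as HasDerivWithinAt
  have hderiv : ∀ t, 0 ≤ t → HasDerivWithinAt f (g t) (Ioi t) t := by
    intro t ht
    rw [hasDerivWithinAt_iff_tendsto_slope]
    have hmap : Tendsto (fun y => y - t) (nhdsWithin t (Ioi t)) (nhdsWithin 0 (Ioi 0)) := by
      apply tendsto_nhdsWithin_of_tendsto_nhds_of_eventually_within
      · have : Tendsto (fun y => y - t) (nhds t) (nhds (t - t)) :=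
          (continuous_id.sub continuous_const).tendsto t
        simpa using this.mono_left nhdsWithin_le_nhds
      · filter_upwards [self_mem_nhdsWithin] with y hy
        simpa [sub_pos] using hy
    have h := (hg t ht).comp hmap
    have heq : ((fun ε => (f (t + ε) - f t) / ε) ∘ fun y => y - t) = slope f t := by
      funext y
      simp [Function.comp, slope_def_field]
    rw [heq] at h
    have hIoi : Ioi t \ {t} = Ioi t := by
      ext y
      simp only [mem_diff, mem_Ioi, mem_singleton_iff]
      exact ⟨fun h => h.1, fun h => ⟨h, ne_of_gt h⟩⟩
    rwa [hIoi]
  -- continuity of f on [0, x]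
  have hcont : ContinuousOn f (Icc 0 x) := by
    intro t ht
    rcases eq_or_lt_of_le ht.1 with h0 | h0
    · subst h0
      have h1 : Tendsto f (nhdsWithin 0 (Ioi 0)) (nhds (f 0)) := by
        have hmul : Tendsto (fun ε : ℝ => ((f (0 + ε) - f 0) / ε) * ε)
            (nhdsWithin 0 (Ioi 0)) (nhds (g 0 * 0)) :=
          (hg 0 le_rfl).mul (tendsto_id.mono_left nhdsWithin_le_nhds)
        have heq : ∀ᶠ ε in nhdsWithin (0:ℝ) (Ioi 0),
            ((f (0 + ε) - f 0) / ε) * ε = f ε - f 0 := by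
          filter_upwards [self_mem_nhdsWithin] with ε hε
          have hε0 : (ε : ℝ) ≠ 0 := ne_of_gt hε
          field_simp
          simp
        have h2 : Tendsto (fun ε : ℝ => f ε - f 0) (nhdsWithin 0 (Ioi 0)) (nhds 0) := by
          have := hmul.congr' heq
          simpa using this
        have h3 := h2.add (tendsto_const_nhds (x := f 0))
        simpa using h3
      unfold ContinuousWithinAt
      have hsub : Icc (0:ℝ) x ⊆ {0} ∪ Ioi 0 := by
        intro y hy
        rcases eq_or_lt_of_le hy.1 with h | h
        · exact Or.inl (by simp [← h])
        · exact Or.inr h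
      refine Tendsto.mono_left ?_ (nhdsWithin_mono _ hsub)
      rw [nhdsWithin_union]
      refine Tendsto.sup ?_ h1
      rw [nhdsWithin_singleton]
      exact tendsto_pure_nhds f 0
    · have hca : ContinuousAt f t := by
        have hio : ContinuousOn f (Ioi 0) := by
          have := hf.continuousOn_interior
          rwa [interior_Ici] at this
        exact hio.continuousAt (isOpen_Ioi.mem_nhds h0)
      exact hca.continuousWithinAt
  have hgint : IntervalIntegrable g volume 0 x := g.mono.intervalIntegrable
  have hA : ∫ t in (0:ℝ)..x, g t = f x - f 0 :=
    intervalIntegral.integral_eq_sub_of_hasDeriv_right_of_le hx hcont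
      (fun t htx => hderiv t htx.1.le) hgint
  -- Step B : layer cake
  have f_nn : (0:ℝ → ℝ) ≤ᵐ[g.measure.restrict (Ioi 0)] fun K => max (x - K) 0 :=
    Eventually.of_forall fun K => le_max_right _ _
  have f_mble : AEStronglyMeasurable (fun K : ℝ => max (x - K) 0) g.measure :=
    ((continuous_const.sub continuous_id).max continuous_const).aestronglyMeasurable
  have f_intble : IntegrableOn (fun K : ℝ => max (x - K) 0) (Ioi 0) g.measure := by
    rw [← Ioc_union_Ioi_eq_Ioi hx]
    apply IntegrableOn.union
    · apply Measure.integrableOn_of_bounded (M := x)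
      · rw [g.measure_Ioc]; exact ENNReal.ofReal_ne_top
      · exact f_mble
      · filter_upwards [ae_restrict_mem measurableSet_Ioc] with K hK
        rw [Real.norm_eq_abs, abs_of_nonneg (le_max_right _ _)]
        exact max_le (by linarith [hK.1]) hx
    · refine (integrableOn_congr_fun (g := fun _ => (0:ℝ)) (fun K hK => ?_)
        measurableSet_Ioi).mpr integrableOn_zero
      have : x - K ≤ 0 := by simp only [mem_Ioi] at hK; linarith
      simp [max_eq_right this]
  have hlayer := f_intble.integral_eq_integral_meas_le f_nn
  -- compute the measures of superlevel sets
  have hcongr : ∀ t ∈ Ioi (0:ℝ),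
      ENNReal.toReal ((g.measure.restrict (Ioi 0)) {K : ℝ | t ≤ max (x - K) 0})
        = max (g (x - t) - g 0) 0 := by
    intro t ht
    simp only [mem_Ioi] at ht
    have hset : {K : ℝ | t ≤ max (x - K) 0} = Iic (x - t) := by
      ext K
      simp only [mem_setOf_eq, mem_Iic, le_max_iff]
      constructor
      · rintro (h | h)
        · linarith
        · linarith
      · intro h; left; linarith
    rw [hset, Measure.restrict_apply measurableSet_Iic, inter_comm, Ioi_inter_Iic,
      g.measure_Ioc, ENNReal.toReal_ofReal']
  have hB : ∫ K in Ioi (0:ℝ), max (x - K) 0 ∂g.measure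
      = ∫ t in Ioi (0:ℝ), max (g (x - t) - g 0) 0 := by
    rw [hlayer]
    exact setIntegral_congr_fun measurableSet_Ioi hcongr
  -- reflection t ↦ x - t
  have hrefl : ∫ t in Ioi (0:ℝ), max (g (x - t) - g 0) 0
      = ∫ s in Iio x, max (g s - g 0) 0 := by
    have hmp : MeasurePreserving (fun t : ℝ => x - t) volume volume :=
      Measure.measurePreserving_sub_left volume x
    have hemb : MeasurableEmbedding (fun t : ℝ => x - t) :=
      (MeasurableEquiv.subLeft x).measurableEmbedding
    have := hmp.setIntegral_preimage_emb hemb (fun s => max (g s - g 0) 0) (Iio x)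
    have hpre : (fun t : ℝ => x - t) ⁻¹' (Iio x) = Ioi 0 := by
      ext t; simp only [mem_preimage, mem_Iio, mem_Ioi]; constructor <;> intro h <;> linarith
    rw [hpre] at this
    exact this
  -- restrict to (0, x)
  have hindic : ∀ s : ℝ, max (g s - g 0) 0 = (Ioi (0:ℝ)).indicator
      (fun s => max (g s - g 0) 0) s := by
    intro s
    rcases le_or_gt s 0 with h | h
    · rw [indicator_of_notMem (by simpa using h)]
      exact max_eq_right (by linarith [g.mono h])
    · rw [indicator_of_mem (mem_Ioi.mpr h)]
  have hrestrict : ∫ s in Iio x, max (g s - g 0) 0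
      = ∫ s in Ioo (0:ℝ) x, (g s - g 0) := by
    calc ∫ s in Iio x, max (g s - g 0) 0
        = ∫ s in Iio x, (Ioi (0:ℝ)).indicator (fun s => max (g s - g 0) 0) s := by
          exact integral_congr_ae (Eventually.of_forall fun s => hindic s)
      _ = ∫ s in Iio x ∩ Ioi 0, max (g s - g 0) 0 := by
          rw [setIntegral_indicator measurableSet_Ioi]
      _ = ∫ s in Ioo (0:ℝ) x, (g s - g 0) := by
          rw [inter_comm, Ioi_inter_Iio]
          refine setIntegral_congr_fun measurableSet_Ioo fun s hs => ?_
          exact max_eq_left (by linarith [g.mono hs.1.le])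
  -- convert to interval integral and conclude
  have hC : ∫ s in Ioo (0:ℝ) x, (g s - g 0) = (f x - f 0) - g 0 * x := by
    rw [← integral_Ioc_eq_integral_Ioo, ← intervalIntegral.integral_of_le hx,
      intervalIntegral.integral_sub hgint intervalIntegrable_const, hA,
      intervalIntegral.integral_const, smul_eq_mul]
    ring
  rw [hB, hrefl, hrestrict, hC]
  ring
end

section
/- Let 0 = K⁰ < K¹ < ⋯ < Kᴺ be real numbers and let C⁰, C¹, …, Cᴺ be real numbers with Cᴺ = 0. Define dCⁱ := (C^{i+1} − Cⁱ)/(K^{i+1} − Kⁱ) for 0 ≤ i ≤ N−1, dCᴺ := 0, and pⁱ := dCⁱ − dC^{i−1} for 1 ≤ i ≤ N. Define the piecewise linear interpolator C̄(K) := dCⁱ·(K − K^{i+1}) + C^{i+1} for K ∈ [Kⁱ, K^{i+1}), 0 ≤ i ≤ N−1. Then for every K ∈ [0, Kᴺ): C̄(K) = Σ_{i=1}^{N} pⁱ · (Kⁱ − K)⁺. -/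
open Finset

/-- the piecewise linear interpolator of discrete call prices
equals the put-payoff expansion `Σ_{i=1}^N pⁱ (Kⁱ - K)⁺` on `[0, Kᴺ)`. -/
theorem stmt_4 {N : ℕ} (K : ℕ → ℝ) (C : ℕ → ℝ)
    (hK0 : K 0 = 0) (hKmono : ∀ i < N, K i < K (i + 1))
    (hCN : C N = 0)
    (dC : ℕ → ℝ)
    (hdC : ∀ i < N, dC i = (C (i + 1) - C i) / (K (i + 1) - K i))
    (hdCN : dC N = 0)
    (p : ℕ → ℝ) (hp : ∀ i, 1 ≤ i → i ≤ N → p i = dC i - dC (i - 1)) :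
    ∀ i < N, ∀ x : ℝ, K i ≤ x → x < K (i + 1) →
      dC i * (x - K (i + 1)) + C (i + 1) = ∑ n ∈ Finset.Icc 1 N, p n * max (K n - x) 0 := by
  intro i hi x hx1 hx2
  -- monotonicity of K up to N
  have hmono : ∀ a b : ℕ, a ≤ b → b ≤ N → K a ≤ K b := by
    intro a b hab hbN
    induction b with
    | zero => simp_all
    | succ m ih =>
      rcases Nat.lt_or_ge a (m + 1) with h | h
      · have h1 : K a ≤ K m := ih (Nat.lt_succ_iff.mp h) (le_of_lt hbN)
        have h2 : K m < K (m + 1) := hKmono m hbN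
        linarith
      · have : a = m + 1 := le_antisymm hab h
        simp [this]
  -- key telescoping identity
  have key : ∀ m j : ℕ, j + m = N →
      ∑ n ∈ Finset.Icc (j + 1) N, (dC n - dC (n - 1)) * (K n - x)
        = dC j * (x - K j) + C j := by
    intro m
    induction m with
    | zero =>
      intro j hj
      simp only [Nat.add_zero] at hj
      subst hj
      rw [Finset.Icc_eq_empty (by omega)]
      simp [hdCN, hCN]
    | succ m ih =>
      intro j hj
      have hjN : j < N := by omega
      have hsplit : Finset.Icc (j + 1) N = insert (j + 1) (Finset.Icc (j + 2) N) := by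
        ext n; simp only [Finset.mem_Icc, Finset.mem_insert]; omega
      rw [hsplit, Finset.sum_insert (by simp)]
      rw [ih (j + 1) (by omega)]
      have hne : K (j + 1) - K j ≠ 0 := sub_ne_zero.mpr (ne_of_gt (hKmono j hjN))
      have hmul : dC j * (K (j + 1) - K j) = C (j + 1) - C j := by
        rw [hdC j hjN]; field_simp
      have hj1 : (j + 1 : ℕ) - 1 = j := by omega
      rw [hj1]
      linear_combination -hmul
  -- split the sum
  have hiN : i ≤ N := le_of_lt hi
  have hIcc : Finset.Icc 1 N = Finset.Ioc 0 N := by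
    ext n; simp only [Finset.mem_Icc, Finset.mem_Ioc]; omega
  rw [hIcc, ← Finset.sum_Ioc_consecutive _ (Nat.zero_le i) hiN]
  have hzero : ∑ n ∈ Finset.Ioc 0 i, p n * max (K n - x) 0 = 0 := by
    apply Finset.sum_eq_zero
    intro n hn
    simp only [Finset.mem_Ioc] at hn
    have : K n ≤ x := le_trans (hmono n i hn.2 hiN) hx1
    rw [max_eq_right (by linarith)]
    ring
  have hIoc : Finset.Ioc i N = Finset.Icc (i + 1) N := by
    ext n; simp only [Finset.mem_Icc, Finset.mem_Ioc]; omega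
  have hrest : ∑ n ∈ Finset.Ioc i N, p n * max (K n - x) 0
      = ∑ n ∈ Finset.Icc (i + 1) N, (dC n - dC (n - 1)) * (K n - x) := by
    rw [hIoc]
    apply Finset.sum_congr rfl
    intro n hn
    simp only [Finset.mem_Icc] at hn
    have hx : x < K n := lt_of_lt_of_le hx2 (hmono (i + 1) n hn.1 hn.2)
    rw [max_eq_left (by linarith), hp n (by omega) hn.2]
  rw [hzero, hrest, key (N - i) i (by omega), zero_add]
  have hne : K (i + 1) - K i ≠ 0 := sub_ne_zero.mpr (ne_of_gt (hKmono i hi))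
  have hmul : dC i * (K (i + 1) - K i) = C (i + 1) - C i := by
    rw [hdC i hi]; field_simp
  linear_combination -hmul
end

section
/- Let G be a standard Gaussian random variable (law equal to the Gaussian measure on ℝ with mean 0 and variance 1), and let s > 0, v > 0, k > 0. Then E[(s·exp(√v·G − v/2) − k)⁺] = s·Φ(d₊) − k·Φ(d₋), where d± = (log(s/k) ± v/2)/√v and Φ is the standard normal CDF. -/
open MeasureTheory ProbabilityTheory Real

/-- The standard normal CDF: the CDF of the Gaussian measure with mean 0 and variance 1. -/
noncomputable def stdNormalCDF (x : ℝ) : ℝ := ((gaussianReal 0 1) (Set.Iic x)).toReal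

lemma setIntegral_gaussianPDFReal (μ : ℝ) (s : Set ℝ) (hs : MeasurableSet s) :
    ∫ x in s, gaussianPDFReal μ 1 x = (gaussianReal μ 1 s).toReal := by
  rw [gaussianReal_apply_eq_integral μ one_ne_zero s, ENNReal.toReal_ofReal]
  exact setIntegral_nonneg hs fun x _ => gaussianPDFReal_nonneg _ _ _

lemma gaussianReal_Ici_toReal (a : ℝ) :
    ((gaussianReal 0 1) (Set.Ici a)).toReal = stdNormalCDF (-a) := by
  have hmap : (gaussianReal (0:ℝ) 1).map (fun x => (-1:ℝ) * x) = gaussianReal 0 1 := by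
    rw [gaussianReal_map_const_mul]
    norm_num
  have hpre : (fun x => (-1:ℝ) * x) ⁻¹' Set.Ici a = Set.Iic (-a) := by
    ext x
    simp only [Set.mem_preimage, Set.mem_Ici, Set.mem_Iic]
    constructor <;> intro h <;> linarith
  have key : (gaussianReal 0 1) (Set.Ici a) = (gaussianReal 0 1) (Set.Iic (-a)) := by
    conv_lhs => rw [← hmap]
    rw [Measure.map_apply (measurable_const_mul _) measurableSet_Ici, hpre]
  rw [stdNormalCDF, key]

/-- `E[(s·exp(√v·G - v/2) - k)⁺] = s·Φ(d₊) - k·Φ(d₋)` for a standard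
Gaussian random variable `G`, where `d± = (log(s/k) ± v/2)/√v`. -/
theorem stmt_6 {Ω : Type*} {m0 : MeasurableSpace Ω} {P : Measure Ω} [IsProbabilityMeasure P]
    (G : Ω → ℝ) (hG : Measurable G)
    (hlaw : P.map G = gaussianReal 0 1)
    (s v k : ℝ) (hs : 0 < s) (hv : 0 < v) (hk : 0 < k) :
    ∫ ω, max (s * Real.exp (Real.sqrt v * G ω - v / 2) - k) 0 ∂P
      = s * stdNormalCDF ((Real.log (s / k) + v / 2) / Real.sqrt v)
        - k * stdNormalCDF ((Real.log (s / k) - v / 2) / Real.sqrt v) := by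
  set σ : ℝ := Real.sqrt v with hσdef
  have hσ : 0 < σ := Real.sqrt_pos.mpr hv
  have hσσ : σ * σ = v := Real.mul_self_sqrt hv.le
  set c : ℝ := (Real.log (k / s) + v / 2) / σ with hcdef
  set F : ℝ → ℝ := fun x => max (s * Real.exp (σ * x - v / 2) - k) 0 with hFdef
  -- step 1: law transfer
  have hFc : Continuous F := by fun_prop
  have h1 : ∫ ω, max (s * Real.exp (σ * G ω - v / 2) - k) 0 ∂P
      = ∫ x, F x ∂(gaussianReal 0 1) := by
    rw [← hlaw, integral_map hG.aemeasurable hFc.aestronglyMeasurable]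
  -- step 2: with density
  have h2 : ∫ x, F x ∂(gaussianReal 0 1)
      = ∫ x, gaussianPDFReal 0 1 x * F x := by
    rw [gaussianReal_of_var_ne_zero 0 one_ne_zero]
    have hgd : gaussianPDF 0 1 = fun x => ((gaussianPDFReal 0 1 x).toNNReal : ENNReal) := rfl
    rw [hgd, integral_withDensity_eq_integral_smul
      ((measurable_gaussianPDFReal 0 1).real_toNNReal)]
    refine integral_congr_ae (Filter.Eventually.of_forall fun x => ?_)
    simp [NNReal.smul_def, Real.coe_toNNReal _ (gaussianPDFReal_nonneg 0 1 x)]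
  -- pointwise pdf identity
  have hpdf : ∀ x : ℝ, gaussianPDFReal σ 1 x
      = Real.exp (σ * x - v / 2) * gaussianPDFReal 0 1 x := by
    intro x
    simp only [gaussianPDFReal, NNReal.coe_one, mul_one, sub_zero]
    rw [mul_comm (Real.exp _), mul_assoc, ← Real.exp_add]
    congr 1
    have : (x - σ)^2 = x^2 - 2*σ*x + σ*σ := by ring
    rw [this]
    have hσ2 : σ^2 = v := by rw [sq, hσσ]
    field_simp
    ring_nf
    rw [hσ2]
  -- threshold characterization
  have hiff : ∀ x : ℝ, k ≤ s * Real.exp (σ * x - v / 2) ↔ c ≤ x := by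
    intro x
    rw [show (k ≤ s * Real.exp (σ * x - v / 2)) ↔ k / s ≤ Real.exp (σ * x - v / 2) by
        rw [div_le_iff₀ hs, mul_comm],
      ← Real.log_le_iff_le_exp (div_pos hk hs), hcdef, div_le_iff₀ hσ]
    constructor <;> intro h <;> nlinarith
  -- indicator form
  have h4 : ∀ x : ℝ, gaussianPDFReal 0 1 x * F x
      = Set.indicator (Set.Ici c)
          (fun x => s * gaussianPDFReal σ 1 x - k * gaussianPDFReal 0 1 x) x := by
    intro x
    by_cases hx : c ≤ x
    · rw [Set.indicator_of_mem (Set.mem_Ici.mpr hx), hFdef]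
      simp only
      rw [max_eq_left (sub_nonneg.mpr ((hiff x).mpr hx)), hpdf x]
      ring
    · rw [Set.indicator_of_notMem (fun h => hx (Set.mem_Ici.mp h)), hFdef]
      simp only
      rw [max_eq_right (sub_nonpos.mpr (le_of_not_ge fun h => hx ((hiff x).mp h))), mul_zero]
  have h5 : ∫ x, gaussianPDFReal 0 1 x * F x
      = ∫ x in Set.Ici c, (s * gaussianPDFReal σ 1 x - k * gaussianPDFReal 0 1 x) := by
    rw [← integral_indicator measurableSet_Ici]
    exact integral_congr_ae (Filter.Eventually.of_forall h4)
  have hint1 : Integrable (fun x => s * gaussianPDFReal σ 1 x)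
      (volume.restrict (Set.Ici c)) :=
    ((integrable_gaussianPDFReal σ 1).restrict).const_mul s
  have hint2 : Integrable (fun x => k * gaussianPDFReal 0 1 x)
      (volume.restrict (Set.Ici c)) :=
    ((integrable_gaussianPDFReal 0 1).restrict).const_mul k
  have h6 : ∫ x in Set.Ici c, (s * gaussianPDFReal σ 1 x - k * gaussianPDFReal 0 1 x)
      = s * ((gaussianReal σ 1) (Set.Ici c)).toReal
        - k * ((gaussianReal 0 1) (Set.Ici c)).toReal := by
    rw [integral_sub hint1 hint2, integral_const_mul, integral_const_mul,
      setIntegral_gaussianPDFReal σ _ measurableSet_Ici,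
      setIntegral_gaussianPDFReal 0 _ measurableSet_Ici]
  -- shift for the drifted gaussian
  have hshift : (gaussianReal σ 1) (Set.Ici c) = (gaussianReal 0 1) (Set.Ici (c - σ)) := by
    have hmap : (gaussianReal (0:ℝ) 1).map (· + σ) = gaussianReal σ 1 := by
      rw [gaussianReal_map_add_const, zero_add]
    have hpre : (fun x : ℝ => x + σ) ⁻¹' Set.Ici c = Set.Ici (c - σ) := by
      ext x
      simp only [Set.mem_preimage, Set.mem_Ici]
      constructor <;> intro h <;> linarith
    rw [← hmap, Measure.map_apply (measurable_add_const σ) measurableSet_Ici, hpre]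
  have hdp : -(c - σ) = (Real.log (s / k) + v / 2) / σ := by
    rw [hcdef, Real.log_div hk.ne' hs.ne', Real.log_div hs.ne' hk.ne',
      eq_div_iff hσ.ne']
    field_simp
    ring_nf
    nlinarith [hσσ]
  have hdm : -c = (Real.log (s / k) - v / 2) / σ := by
    rw [hcdef, Real.log_div hk.ne' hs.ne', Real.log_div hs.ne' hk.ne',
      eq_div_iff hσ.ne']
    field_simp
    ring
  rw [h1, h2, h5, h6, hshift, gaussianReal_Ici_toReal, gaussianReal_Ici_toReal, hdp, hdm]
end

section
/- Fix s > 0 and v > 0. The map k ↦ Call(s,k,v) on (0,∞) is: (1) strictly decreasing; (2) strictly convex; (3) differentiable with derivative ∂_k Call(s,k,v) = −Φ(d₋) where d₋ = (log(s/k) − v/2)/√v, and this derivative lies in the open interval (−1, 0) for every k > 0; (4) lim_{k→0⁺} Call(s,k,v) = s; and (5) lim_{k→∞} Call(s,k,v) = 0. -/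
open MeasureTheory ProbabilityTheory Real Filter Set
open scoped ENNReal NNReal Topology

/-- The Black–Scholes call price `Call(s,k,v) = s·Φ(d₊) - k·Φ(d₋)`, with the
convention `Call(s,0,v) = s`. -/
noncomputable def Call (s k v : ℝ) : ℝ :=
  if k = 0 then s
  else s * stdNormalCDF ((Real.log (s / k) + v / 2) / Real.sqrt v)
       - k * stdNormalCDF ((Real.log (s / k) - v / 2) / Real.sqrt v)

lemma phi_cont : Continuous (gaussianPDFReal 0 1) := by
  unfold gaussianPDFReal; fun_prop

lemma phi_int : Integrable (gaussianPDFReal 0 1) := integrable_gaussianPDFReal 0 1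

lemma stdNormalCDF_eq (x : ℝ) :
    stdNormalCDF x = ∫ t in Iic x, gaussianPDFReal 0 1 t := by
  rw [stdNormalCDF, gaussianReal_apply_eq_integral 0 one_ne_zero,
    ENNReal.toReal_ofReal]
  exact setIntegral_nonneg measurableSet_Iic fun t _ => gaussianPDFReal_nonneg 0 1 t

lemma stdNormalCDF_hasDerivAt (x : ℝ) :
    HasDerivAt stdNormalCDF (gaussianPDFReal 0 1 x) x := by
  have h : ∀ y : ℝ, stdNormalCDF y =
      stdNormalCDF 0 + ∫ t in (0:ℝ)..y, gaussianPDFReal 0 1 t := by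
    intro y
    rw [stdNormalCDF_eq, stdNormalCDF_eq,
      ← intervalIntegral.integral_Iic_sub_Iic phi_int.integrableOn phi_int.integrableOn]
    ring
  have H : HasDerivAt (fun y => stdNormalCDF 0 + ∫ t in (0:ℝ)..y, gaussianPDFReal 0 1 t)
      (gaussianPDFReal 0 1 x) x :=
    (intervalIntegral.integral_hasDerivAt_right
      (phi_int.intervalIntegrable)
      (phi_cont.stronglyMeasurableAtFilter _ _)
      phi_cont.continuousAt).const_add (stdNormalCDF 0)
  exact H.congr_of_eventuallyEq (Filter.Eventually.of_forall fun y => h y)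

lemma stdNormalCDF_strictMono : StrictMono stdNormalCDF := by
  intro a b hab
  have h : stdNormalCDF b - stdNormalCDF a = ∫ t in a..b, gaussianPDFReal 0 1 t := by
    rw [stdNormalCDF_eq, stdNormalCDF_eq,
      intervalIntegral.integral_Iic_sub_Iic phi_int.integrableOn phi_int.integrableOn]
  have hpos : 0 < ∫ t in a..b, gaussianPDFReal 0 1 t := by
    apply intervalIntegral.intervalIntegral_pos_of_pos_on
      (phi_int.intervalIntegrable)
      (fun t _ => gaussianPDFReal_pos 0 1 t one_ne_zero) hab
  linarith [h ▸ hpos]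

lemma stdNormalCDF_nonneg (x : ℝ) : 0 ≤ stdNormalCDF x := ENNReal.toReal_nonneg

lemma stdNormalCDF_le_one (x : ℝ) : stdNormalCDF x ≤ 1 := by
  rw [stdNormalCDF]
  have : (gaussianReal 0 1) (Set.Iic x) ≤ 1 := prob_le_one
  exact ENNReal.toReal_le_of_le_ofReal one_pos.le (by simpa using this)

lemma stdNormalCDF_pos (x : ℝ) : 0 < stdNormalCDF x :=
  lt_of_le_of_lt (stdNormalCDF_nonneg (x - 1)) (stdNormalCDF_strictMono (by linarith))

lemma stdNormalCDF_lt_one (x : ℝ) : stdNormalCDF x < 1 :=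
  lt_of_lt_of_le (stdNormalCDF_strictMono (show x < x + 1 by linarith)) (stdNormalCDF_le_one _)

lemma stdNormalCDF_tendsto_atTop : Tendsto stdNormalCDF atTop (nhds 1) := by
  have h := tendsto_measure_Iic_atTop (gaussianReal 0 1)
  have huniv : (gaussianReal 0 1) Set.univ = 1 := measure_univ
  rw [huniv] at h
  have := (ENNReal.tendsto_toReal (by norm_num : (1:ℝ≥0∞) ≠ ⊤)).comp h
  rw [ENNReal.toReal_one] at this
  exact this

lemma chernoff_integrable (l : ℝ) :
    Integrable (fun t => rexp (-l * t) * gaussianPDFReal 0 1 t) := by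
  have h : (fun t => rexp (-l * t) * gaussianPDFReal 0 1 t)
      = fun t => (Real.sqrt (2 * π))⁻¹ * rexp (l ^ 2 / 2) * rexp (-(1/2) * (t + l) ^ 2) := by
    funext t
    rw [gaussianPDFReal]
    push_cast
    rw [mul_comm (rexp (-l * t)), mul_assoc, ← Real.exp_add,
      show (2:ℝ) * π * 1 = 2 * π by ring, mul_assoc, ← Real.exp_add]
    congr 1
    ring
  rw [h]
  exact ((integrable_exp_neg_mul_sq (by norm_num : (0:ℝ) < 1/2)).comp_add_right l).const_mul _

lemma chernoff (l x : ℝ) (hl : 0 ≤ l) :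
    stdNormalCDF x ≤ rexp (l * x) * ∫ t, rexp (-l * t) * gaussianPDFReal 0 1 t := by
  rw [stdNormalCDF_eq]
  have hint := chernoff_integrable l
  calc ∫ t in Iic x, gaussianPDFReal 0 1 t
      ≤ ∫ t in Iic x, rexp (l * x) * (rexp (-l * t) * gaussianPDFReal 0 1 t) := by
        apply setIntegral_mono_on phi_int.integrableOn
          ((hint.const_mul _).integrableOn) measurableSet_Iic
        intro t ht
        have ht' : t ≤ x := ht
        have h1 : 1 ≤ rexp (l * x) * rexp (-l * t) := by
          rw [← Real.exp_add]
          refine Real.one_le_exp ?_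
          nlinarith
        nlinarith [gaussianPDFReal_nonneg 0 1 t]
    _ ≤ ∫ t, rexp (l * x) * (rexp (-l * t) * gaussianPDFReal 0 1 t) := by
        apply setIntegral_le_integral (hint.const_mul _)
        filter_upwards with t
        exact mul_nonneg (Real.exp_pos _).le
          (mul_nonneg (Real.exp_pos _).le (gaussianPDFReal_nonneg 0 1 t))
    _ = rexp (l * x) * ∫ t, rexp (-l * t) * gaussianPDFReal 0 1 t := by
        rw [integral_const_mul]

lemma stdNormalCDF_tendsto_atBot : Tendsto stdNormalCDF atBot (nhds 0) := by
  set M := ∫ t, rexp (-1 * t) * gaussianPDFReal 0 1 t with hM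
  have hb : Tendsto (fun x : ℝ => rexp (1 * x) * M) atBot (nhds 0) := by
    have h1 : Tendsto (fun x : ℝ => rexp (1 * x)) atBot (nhds 0) := by
      simpa using Real.tendsto_exp_atBot
    simpa using h1.mul_const M
  refine tendsto_of_tendsto_of_tendsto_of_le_of_le tendsto_const_nhds hb
    (fun x => stdNormalCDF_nonneg x) (fun x => chernoff 1 x zero_le_one)

lemma call_hasDerivAt (s v : ℝ) (hs : 0 < s) (hv : 0 < v) {k : ℝ} (hk : 0 < k) :
    HasDerivAt (fun k' => Call s k' v)
      (-(stdNormalCDF ((Real.log (s / k) - v / 2) / Real.sqrt v))) k := by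
  have hr : 0 < Real.sqrt v := Real.sqrt_pos.mpr hv
  have hr2 : Real.sqrt v ^ 2 = v := Real.sq_sqrt hv.le
  set r := Real.sqrt v with hrdef
  set dp := (Real.log s - Real.log k + v / 2) / r with hdpdef
  set dm := (Real.log s - Real.log k - v / 2) / r with hdmdef
  have hlog : HasDerivAt (fun k' : ℝ => Real.log s - Real.log k') (-k⁻¹) k :=
    (Real.hasDerivAt_log hk.ne').const_sub (Real.log s)
  have hdp : HasDerivAt (fun k' => (Real.log s - Real.log k' + v / 2) / r) (-k⁻¹ / r) k :=
    (hlog.add_const (v / 2)).div_const r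
  have hdm : HasDerivAt (fun k' => (Real.log s - Real.log k' - v / 2) / r) (-k⁻¹ / r) k :=
    (hlog.sub_const (v / 2)).div_const r
  have hPp : HasDerivAt (fun k' => stdNormalCDF ((Real.log s - Real.log k' + v / 2) / r))
      (gaussianPDFReal 0 1 dp * (-k⁻¹ / r)) k := by have := (stdNormalCDF_hasDerivAt dp).comp k hdp; exact this
  have hPm : HasDerivAt (fun k' => stdNormalCDF ((Real.log s - Real.log k' - v / 2) / r))
      (gaussianPDFReal 0 1 dm * (-k⁻¹ / r)) k := by have := (stdNormalCDF_hasDerivAt dm).comp k hdm; exact this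
  have hmul : HasDerivAt
      (fun k' => k' * stdNormalCDF ((Real.log s - Real.log k' - v / 2) / r))
      (1 * stdNormalCDF dm + k * (gaussianPDFReal 0 1 dm * (-k⁻¹ / r))) k :=
    (hasDerivAt_id k).mul hPm
  have hg : HasDerivAt
      (fun k' => s * stdNormalCDF ((Real.log s - Real.log k' + v / 2) / r)
        - k' * stdNormalCDF ((Real.log s - Real.log k' - v / 2) / r))
      (s * (gaussianPDFReal 0 1 dp * (-k⁻¹ / r))
        - (1 * stdNormalCDF dm + k * (gaussianPDFReal 0 1 dm * (-k⁻¹ / r)))) k :=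
    (hPp.const_mul s).sub hmul
  have hexp : dp ^ 2 / 2 = dm ^ 2 / 2 + (Real.log s - Real.log k) := by
    have h2 : dp ^ 2 = dm ^ 2 + 2 * (Real.log s - Real.log k) := by
      rw [hdpdef, hdmdef, div_pow, div_pow, hr2]
      field_simp
      ring
    linarith
  have hkey : s * gaussianPDFReal 0 1 dp = k * gaussianPDFReal 0 1 dm := by
    simp only [gaussianPDFReal]
    push_cast
    have h1 : rexp (-(dp - 0) ^ 2 / (2 * 1)) = rexp (-(dm - 0) ^ 2 / (2 * 1)) * (k / s) := by
      rw [← Real.exp_log (div_pos hk hs), ← Real.exp_add]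
      congr 1
      rw [Real.log_div hk.ne' hs.ne']
      norm_num
      linarith
    rw [h1]
    field_simp
  have hval : s * (gaussianPDFReal 0 1 dp * (-k⁻¹ / r))
      - (1 * stdNormalCDF dm + k * (gaussianPDFReal 0 1 dm * (-k⁻¹ / r)))
      = -(stdNormalCDF dm) := by
    linear_combination (-k⁻¹ / r) * hkey
  rw [hval] at hg
  have hfin : HasDerivAt (fun k' => Call s k' v) (-(stdNormalCDF dm)) k := by
    apply hg.congr_of_eventuallyEq
    filter_upwards [eventually_gt_nhds hk] with k' hk'
    rw [Call, if_neg hk'.ne', Real.log_div hs.ne' hk'.ne']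
  have : (Real.log (s / k) - v / 2) / Real.sqrt v = dm := by
    rw [hdmdef, Real.log_div hs.ne' hk.ne']
  rw [this]
  exact hfin

/-- properties of `k ↦ Call(s,k,v)` on `(0,∞)` for fixed `s,v > 0`:
strictly decreasing, strictly convex, differentiable with derivative `-Φ(d₋) ∈ (-1,0)`,
tends to `s` as `k → 0⁺` and to `0` as `k → ∞`. -/
theorem stmt_7 (s v : ℝ) (hs : 0 < s) (hv : 0 < v) :
    StrictAntiOn (fun k => Call s k v) (Ioi 0) ∧
    StrictConvexOn ℝ (Ioi 0) (fun k => Call s k v) ∧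
    (∀ k : ℝ, 0 < k →
      HasDerivAt (fun k' => Call s k' v)
        (-(stdNormalCDF ((Real.log (s / k) - v / 2) / Real.sqrt v))) k ∧
      -(stdNormalCDF ((Real.log (s / k) - v / 2) / Real.sqrt v)) ∈ Ioo (-1 : ℝ) 0) ∧
    Tendsto (fun k => Call s k v) (nhdsWithin 0 (Ioi 0)) (nhds s) ∧
    Tendsto (fun k => Call s k v) atTop (nhds 0) := by
  have hr : 0 < Real.sqrt v := Real.sqrt_pos.mpr hv
  have hderiv : ∀ k : ℝ, 0 < k → HasDerivAt (fun k' => Call s k' v)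
      (-(stdNormalCDF ((Real.log (s / k) - v / 2) / Real.sqrt v))) k :=
    fun k hk => call_hasDerivAt s v hs hv hk
  have hderiv_eq : ∀ k : ℝ, 0 < k → deriv (fun k' => Call s k' v) k
      = -(stdNormalCDF ((Real.log (s / k) - v / 2) / Real.sqrt v)) :=
    fun k hk => (hderiv k hk).deriv
  have hcont : ContinuousOn (fun k => Call s k v) (Ioi 0) :=
    fun k hk => ((hderiv k hk).differentiableAt.continuousAt).continuousWithinAt
  have hdm_anti : ∀ a b : ℝ, 0 < a → a < b →
      (Real.log (s / b) - v / 2) / Real.sqrt v < (Real.log (s / a) - v / 2) / Real.sqrt v := by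
    intro a b ha hab
    have hb : 0 < b := ha.trans hab
    have h1 : s / b < s / a := div_lt_div_of_pos_left hs ha hab
    have h2 : Real.log (s / b) < Real.log (s / a) := Real.log_lt_log (div_pos hs hb) h1
    gcongr
  refine ⟨?_, ?_, ?_, ?_, ?_⟩
  · apply strictAntiOn_of_deriv_neg (convex_Ioi 0) hcont
    intro x hx
    rw [interior_Ioi] at hx
    rw [hderiv_eq x hx]
    simpa using stdNormalCDF_pos _
  · apply StrictMonoOn.strictConvexOn_of_deriv (convex_Ioi 0) hcont
    rw [interior_Ioi]
    intro a ha b hb hab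
    rw [hderiv_eq a ha, hderiv_eq b hb]
    exact neg_lt_neg (stdNormalCDF_strictMono (hdm_anti a b ha hab))
  · intro k hk
    refine ⟨hderiv k hk, ?_, ?_⟩
    · simpa using stdNormalCDF_lt_one _
    · simpa using stdNormalCDF_pos _
  · -- limit at 0⁺
    have hev : ∀ᶠ k in 𝓝[>] (0:ℝ), (fun k =>
        s * stdNormalCDF ((Real.log s - Real.log k + v / 2) / Real.sqrt v)
        - k * stdNormalCDF ((Real.log s - Real.log k - v / 2) / Real.sqrt v)) k
        = Call s k v := by
      filter_upwards [self_mem_nhdsWithin] with k hk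
      rw [Call, if_neg (ne_of_gt hk), Real.log_div hs.ne' (ne_of_gt hk)]
    have hlogbot : Tendsto Real.log (𝓝[>] (0:ℝ)) atBot :=
      Real.tendsto_log_nhdsGT_zero
    have hdp_top : Tendsto (fun k => (Real.log s - Real.log k + v / 2) / Real.sqrt v)
        (𝓝[>] (0:ℝ)) atTop := by
      apply Tendsto.atTop_div_const hr
      have h1 := tendsto_neg_atBot_atTop.comp hlogbot
      have h2 := tendsto_atTop_add_const_right _ (Real.log s + v / 2) h1
      exact h2.congr fun k => by simp [Function.comp]; ring
    have h1 : Tendsto (fun k => s * stdNormalCDF ((Real.log s - Real.log k + v / 2) / Real.sqrt v))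
        (𝓝[>] (0:ℝ)) (nhds (s * 1)) :=
      tendsto_const_nhds.mul (stdNormalCDF_tendsto_atTop.comp hdp_top)
    have hid : Tendsto (fun k : ℝ => k) (𝓝[>] (0:ℝ)) (nhds 0) :=
      tendsto_id.mono_left nhdsWithin_le_nhds
    have h2 : Tendsto (fun k => k * stdNormalCDF ((Real.log s - Real.log k - v / 2) / Real.sqrt v))
        (𝓝[>] (0:ℝ)) (nhds 0) := by
      apply tendsto_of_tendsto_of_tendsto_of_le_of_le' tendsto_const_nhds hid
      · filter_upwards [self_mem_nhdsWithin] with k hk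
        exact mul_nonneg (le_of_lt hk) (stdNormalCDF_nonneg _)
      · filter_upwards [self_mem_nhdsWithin] with k hk
        have hk' : 0 < k := hk
        nlinarith [stdNormalCDF_le_one ((Real.log s - Real.log k - v / 2) / Real.sqrt v),
          stdNormalCDF_nonneg ((Real.log s - Real.log k - v / 2) / Real.sqrt v)]
    have := (h1.sub h2).congr' hev
    simpa using this
  · -- limit at ∞
    have hev : ∀ᶠ k in (atTop : Filter ℝ), (fun k =>
        s * stdNormalCDF ((Real.log s - Real.log k + v / 2) / Real.sqrt v)
        - k * stdNormalCDF ((Real.log s - Real.log k - v / 2) / Real.sqrt v)) k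
        = Call s k v := by
      filter_upwards [eventually_gt_atTop (0:ℝ)] with k hk
      rw [Call, if_neg (ne_of_gt hk), Real.log_div hs.ne' (ne_of_gt hk)]
    have hdp_bot : Tendsto (fun k => (Real.log s - Real.log k + v / 2) / Real.sqrt v)
        (atTop : Filter ℝ) atBot := by
      apply Tendsto.atBot_div_const hr
      have h1 := tendsto_neg_atTop_atBot.comp Real.tendsto_log_atTop
      have h2 := tendsto_atBot_add_const_right _ (Real.log s + v / 2) h1
      exact h2.congr fun k => by simp [Function.comp]; ring
    have h1 : Tendsto (fun k => s * stdNormalCDF ((Real.log s - Real.log k + v / 2) / Real.sqrt v))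
        (atTop : Filter ℝ) (nhds (s * 0)) :=
      tendsto_const_nhds.mul (stdNormalCDF_tendsto_atBot.comp hdp_bot)
    set M := ∫ t, rexp (-(2 * Real.sqrt v) * t) * gaussianPDFReal 0 1 t with hMdef
    have hu : Tendsto (fun k : ℝ => rexp (2 * Real.log s - v) * M * k⁻¹) atTop (nhds 0) := by
      have := tendsto_inv_atTop_zero.const_mul (rexp (2 * Real.log s - v) * M)
      simpa using this
    have h2 : Tendsto (fun k => k * stdNormalCDF ((Real.log s - Real.log k - v / 2) / Real.sqrt v))
        (atTop : Filter ℝ) (nhds 0) := by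
      apply tendsto_of_tendsto_of_tendsto_of_le_of_le' tendsto_const_nhds hu
      · filter_upwards [eventually_gt_atTop (0:ℝ)] with k hk
        exact mul_nonneg (le_of_lt hk) (stdNormalCDF_nonneg _)
      · filter_upwards [eventually_gt_atTop (0:ℝ)] with k hk
        have hch := chernoff (2 * Real.sqrt v) ((Real.log s - Real.log k - v / 2) / Real.sqrt v)
          (by positivity)
        have hb : k * stdNormalCDF ((Real.log s - Real.log k - v / 2) / Real.sqrt v)
            ≤ k * (rexp ((2 * Real.sqrt v) * ((Real.log s - Real.log k - v / 2) / Real.sqrt v)) * M) :=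
          mul_le_mul_of_nonneg_left hch hk.le
        refine hb.trans (le_of_eq ?_)
        have e1 : (2 * Real.sqrt v) * ((Real.log s - Real.log k - v / 2) / Real.sqrt v)
            = (2 * Real.log s - v) + (-Real.log k + -Real.log k) := by
          field_simp
          ring
        rw [e1, Real.exp_add, Real.exp_add, Real.exp_neg, Real.exp_log hk]
        field_simp
    have := (h1.sub h2).congr' hev
    simpa using this
end

section
/- Let Y be an integrable random variable with Y > 0 almost surely and E[Y] = 1. Let 0 < K¹ < ⋯ < Kᴺ be real numbers and q ∈ ℝᴺ with qⁱ ≥ 0, Σ_{i=1}^{N} qⁱ = 1, and Σ_{i=1}^{N} qⁱ·Kⁱ = 1. Define Ĉ(K) := Σ_{i=1}^{N} qⁱ·E[(Kⁱ·Y − K)⁺] for K ≥ 0. Then: (1) Ĉ(0) = 1; (2) Ĉ is convex and nonincreasing; (3) lim_{K→∞} Ĉ(K) = 0; (4) the right derivative of Ĉ at 0 equals −1; and (5) Ĉ(K) ≥ (1 − K)⁺ for all K ≥ 0. -/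
open MeasureTheory Filter Set Finset

/-- properties of `Ĉ(K) = Σ_{i=1}^N qⁱ E[(Kⁱ·Y - K)⁺]` where `Y > 0`
a.s. is integrable with `E[Y] = 1` and `q` is a density with unit mean on the
strikes `0 < K¹ < ⋯ < Kᴺ`. -/
theorem stmt_10 {Ω : Type*} {m0 : MeasurableSpace Ω} {P : Measure Ω} [IsProbabilityMeasure P]
    (Y : Ω → ℝ) (hYint : Integrable Y P) (hYpos : ∀ᵐ ω ∂P, 0 < Y ω)
    (hYmean : ∫ ω, Y ω ∂P = 1)
    {N : ℕ} (K : ℕ → ℝ) (q : ℕ → ℝ)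
    (hKpos : 0 < K 1) (hKmono : ∀ i, 1 ≤ i → i < N → K i < K (i + 1))
    (hq : ∀ i, 1 ≤ i → i ≤ N → 0 ≤ q i)
    (hq1 : ∑ i ∈ Finset.Icc 1 N, q i = 1)
    (hqK : ∑ i ∈ Finset.Icc 1 N, q i * K i = 1)
    (Chat : ℝ → ℝ)
    (hChat : ∀ x, 0 ≤ x →
      Chat x = ∑ i ∈ Finset.Icc 1 N, q i * ∫ ω, max (K i * Y ω - x) 0 ∂P) :
    Chat 0 = 1 ∧
    (ConvexOn ℝ (Ici 0) Chat ∧ AntitoneOn Chat (Ici 0)) ∧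
    Tendsto Chat atTop (nhds 0) ∧
    Tendsto (fun ε => (Chat (0 + ε) - Chat 0) / ε) (nhdsWithin 0 (Ioi 0)) (nhds (-1)) ∧
    (∀ x, 0 ≤ x → Chat x ≥ max (1 - x) 0) := by
  -- integrability of the payoff
  have hint : ∀ (c x : ℝ), Integrable (fun ω => max (c * Y ω - x) 0) P := fun c x =>
    ((hYint.const_mul c).sub (integrable_const x)).pos_part
  -- positivity of strikes
  have hK : ∀ i, 1 ≤ i → i ≤ N → 0 < K i := by
    intro i hi
    induction i, hi using Nat.le_induction with
    | base => intro _; exact hKpos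
    | succ n hn ih =>
      intro hle
      exact lt_trans (ih (le_of_lt hle)) (hKmono n hn hle)
  -- value of a single term at x = 0
  have hterm0 : ∀ i ∈ Finset.Icc 1 N, (∫ ω, max (K i * Y ω - 0) 0 ∂P) = K i := by
    intro i hi
    rw [Finset.mem_Icc] at hi
    have hKi := hK i hi.1 hi.2
    have : (fun ω => max (K i * Y ω - 0) 0) =ᵐ[P] fun ω => K i * Y ω := by
      filter_upwards [hYpos] with ω hω
      rw [sub_zero, max_eq_left (le_of_lt (mul_pos hKi hω))]
    rw [integral_congr_ae this, integral_const_mul, hYmean, mul_one]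
  have hChat0 : Chat 0 = 1 := by
    rw [hChat 0 le_rfl, Finset.sum_congr rfl fun i hi => by rw [hterm0 i hi], hqK]
  refine ⟨hChat0, ⟨?_, ?_⟩, ?_, ?_, ?_⟩
  · -- convexity
    refine ⟨convex_Ici 0, ?_⟩
    intro x hx y hy a b ha hb hab
    rw [Set.mem_Ici] at hx hy
    have hxy : (0:ℝ) ≤ a * x + b * y := add_nonneg (mul_nonneg ha hx) (mul_nonneg hb hy)
    simp only [smul_eq_mul]
    rw [hChat x hx, hChat y hy, hChat _ hxy, Finset.mul_sum, Finset.mul_sum,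
      ← Finset.sum_add_distrib]
    refine Finset.sum_le_sum fun i hi => ?_
    rw [Finset.mem_Icc] at hi
    have hqi := hq i hi.1 hi.2
    have key : (∫ ω, max (K i * Y ω - (a * x + b * y)) 0 ∂P) ≤
        a * (∫ ω, max (K i * Y ω - x) 0 ∂P) + b * (∫ ω, max (K i * Y ω - y) 0 ∂P) := by
      rw [← integral_const_mul, ← integral_const_mul,
        ← integral_add ((hint (K i) x).const_mul a) ((hint (K i) y).const_mul b)]
      refine integral_mono (hint _ _)
        (((hint (K i) x).const_mul a).add ((hint (K i) y).const_mul b)) fun ω => ?_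
      have h1 : K i * Y ω - x ≤ max (K i * Y ω - x) 0 := le_max_left _ _
      have h2 : K i * Y ω - y ≤ max (K i * Y ω - y) 0 := le_max_left _ _
      have h3 : (0:ℝ) ≤ max (K i * Y ω - x) 0 := le_max_right _ _
      have h4 : (0:ℝ) ≤ max (K i * Y ω - y) 0 := le_max_right _ _
      refine max_le ?_ (by nlinarith)
      nlinarith [mul_le_mul_of_nonneg_left h1 ha, mul_le_mul_of_nonneg_left h2 hb]
    calc q i * ∫ ω, max (K i * Y ω - (a * x + b * y)) 0 ∂P
        ≤ q i * (a * (∫ ω, max (K i * Y ω - x) 0 ∂P) +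
            b * (∫ ω, max (K i * Y ω - y) 0 ∂P)) := mul_le_mul_of_nonneg_left key hqi
      _ = a * (q i * ∫ ω, max (K i * Y ω - x) 0 ∂P) +
            b * (q i * ∫ ω, max (K i * Y ω - y) 0 ∂P) := by ring
  · -- antitone
    intro x hx y hy hxy
    rw [Set.mem_Ici] at hx hy
    rw [hChat x hx, hChat y hy]
    refine Finset.sum_le_sum fun i hi => ?_
    rw [Finset.mem_Icc] at hi
    refine mul_le_mul_of_nonneg_left ?_ (hq i hi.1 hi.2)
    refine integral_mono (hint _ _) (hint _ _) fun ω => ?_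
    exact max_le_max (by linarith) le_rfl
  · -- limit at infinity
    have h3 : ∀ i ∈ Finset.Icc 1 N,
        Tendsto (fun x => ∫ ω, max (K i * Y ω - x) 0 ∂P) atTop (nhds 0) := by
      intro i hi
      have := tendsto_integral_filter_of_dominated_convergence (μ := P) (l := atTop)
        (F := fun x ω => max (K i * Y ω - x) 0) (f := fun _ => (0:ℝ))
        (fun ω => |K i * Y ω|)
        (Eventually.of_forall fun x => (hint (K i) x).aestronglyMeasurable)
        ?_ (hYint.const_mul (K i)).abs ?_
      · simpa using this
      · filter_upwards [eventually_ge_atTop (0:ℝ)] with x hx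
        refine Eventually.of_forall fun ω => ?_
        rw [Real.norm_of_nonneg (le_max_right _ _)]
        refine max_le ?_ (abs_nonneg _)
        calc K i * Y ω - x ≤ K i * Y ω := by linarith
          _ ≤ |K i * Y ω| := le_abs_self _
      · refine Eventually.of_forall fun ω => ?_
        refine tendsto_const_nhds.congr' ?_
        filter_upwards [eventually_ge_atTop (K i * Y ω)] with x hx
        rw [max_eq_right (by linarith)]
    have hsum : Tendsto (fun x => ∑ i ∈ Finset.Icc 1 N,
        q i * ∫ ω, max (K i * Y ω - x) 0 ∂P) atTop (nhds 0) := by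
      have := tendsto_finset_sum (Finset.Icc 1 N)
        (fun i hi => ((h3 i hi).const_mul (q i)))
      simpa using this
    refine hsum.congr' ?_
    filter_upwards [eventually_ge_atTop (0:ℝ)] with x hx
    exact (hChat x hx).symm
  · -- right derivative at 0
    have h4 : ∀ i ∈ Finset.Icc 1 N,
        Tendsto (fun ε => ((∫ ω, max (K i * Y ω - ε) 0 ∂P) - K i) / ε)
          (nhdsWithin 0 (Ioi 0)) (nhds (-1)) := by
      intro i hi
      rw [Finset.mem_Icc] at hi
      have hKi := hK i hi.1 hi.2
      have key := tendsto_integral_filter_of_dominated_convergence (μ := P)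
        (l := nhdsWithin (0:ℝ) (Ioi 0))
        (F := fun ε ω => (max (K i * Y ω - ε) 0 - K i * Y ω) / ε)
        (f := fun _ => (-1:ℝ)) (fun _ => (1:ℝ))
        (Eventually.of_forall fun ε =>
          (((hint (K i) ε).sub (hYint.const_mul (K i))).div_const ε).aestronglyMeasurable)
        ?_ (integrable_const 1) ?_
      · have heq : ∀ᶠ ε in nhdsWithin (0:ℝ) (Ioi 0),
            (∫ ω, (max (K i * Y ω - ε) 0 - K i * Y ω) / ε ∂P) =
              ((∫ ω, max (K i * Y ω - ε) 0 ∂P) - K i) / ε := by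
          refine Eventually.of_forall fun ε => ?_
          rw [integral_div, integral_sub (hint (K i) ε) (hYint.const_mul (K i)),
            integral_const_mul, hYmean, mul_one]
        have := key.congr' heq
        simpa using this
      · filter_upwards [self_mem_nhdsWithin] with ε (hε : 0 < ε)
        filter_upwards [hYpos] with ω hω
        have hu : 0 < K i * Y ω := mul_pos hKi hω
        rw [Real.norm_eq_abs, abs_div, abs_of_pos hε, div_le_one hε]
        rcases le_total (K i * Y ω - ε) 0 with h | h
        · rw [max_eq_right h, abs_of_nonpos (by linarith)]
          linarith
        · rw [max_eq_left h, abs_of_nonpos (by linarith)]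
          linarith
      · filter_upwards [hYpos] with ω hω
        have hu : 0 < K i * Y ω := mul_pos hKi hω
        refine tendsto_const_nhds.congr' ?_
        filter_upwards [Ioo_mem_nhdsGT_of_mem ⟨le_rfl, hu⟩] with ε hε
        have hne : ε ≠ 0 := ne_of_gt hε.1
        rw [max_eq_left (by linarith [hε.1, hε.2]),
          show K i * Y ω - ε - K i * Y ω = -ε by ring, neg_div, div_self hne]
    have hsum : Tendsto (fun ε => ∑ i ∈ Finset.Icc 1 N,
        q i * (((∫ ω, max (K i * Y ω - ε) 0 ∂P) - K i) / ε))
        (nhdsWithin 0 (Ioi 0)) (nhds (-1)) := by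
      have := tendsto_finset_sum (Finset.Icc 1 N)
        (fun i hi => ((h4 i hi).const_mul (q i)))
      have h1 : ∑ i ∈ Finset.Icc 1 N, q i * (-1 : ℝ) = -1 := by
        rw [← Finset.sum_mul, hq1, one_mul]
      rwa [h1] at this
    refine hsum.congr' ?_
    filter_upwards [self_mem_nhdsWithin] with ε (hε : 0 < ε)
    rw [zero_add, hChat ε (le_of_lt hε), hChat0]
    rw [← hqK, ← Finset.sum_sub_distrib, Finset.sum_div]
    exact (Finset.sum_congr rfl fun i hi => by ring).symm
  · -- lower bound
    intro x hx
    rw [hChat x hx, ge_iff_le]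
    refine max_le ?_ ?_
    · have hterm : ∀ i ∈ Finset.Icc 1 N,
          q i * (K i - x) ≤ q i * ∫ ω, max (K i * Y ω - x) 0 ∂P := by
        intro i hi
        rw [Finset.mem_Icc] at hi
        refine mul_le_mul_of_nonneg_left ?_ (hq i hi.1 hi.2)
        have : K i - x = ∫ ω, (K i * Y ω - x) ∂P := by
          rw [integral_sub (hYint.const_mul (K i)) (integrable_const x),
            integral_const_mul, hYmean, mul_one, integral_const, probReal_univ,
            one_smul]
        rw [this]
        exact integral_mono ((hYint.const_mul (K i)).sub (integrable_const x))
          (hint _ _) fun ω => le_max_left _ _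
      calc 1 - x = ∑ i ∈ Finset.Icc 1 N, q i * (K i - x) := by
            simp_rw [mul_sub]
            rw [Finset.sum_sub_distrib, hqK, ← Finset.sum_mul, hq1, one_mul]
        _ ≤ _ := Finset.sum_le_sum hterm
    · refine Finset.sum_nonneg fun i hi => ?_
      rw [Finset.mem_Icc] at hi
      exact mul_nonneg (hq i hi.1 hi.2)
        (integral_nonneg fun ω => le_max_right _ _)
end

section
/- Let (Y_j, Y_{j+1}) be a two-step nonnegative martingale (i.e., Y_j, Y_{j+1} are nonnegative integrable random variables on a filtered probability space with E[Y_{j+1} | F_j] = Y_j almost surely and Y_j is F_j-measurable), with E[Y_j] = 1. Let 0 < K¹ < ⋯ < Kᴺ be real numbers, let q_j, q_{j+1} ∈ ℝᴺ be entrywise nonnegative with entries summing to 1, and suppose q_{j+1} = P·q_j for some matrix P ∈ ℝ^{N×N} with P ≥ 0 entrywise, columns summing to 1, and Σ_i Kⁱ·P_{i,ℓ} = K^ℓ for every ℓ. Then for every K ≥ 0: Σ_{i=1}^{N} q_j^i·E[(Kⁱ·Y_j − K)⁺] ≤ Σ_{i=1}^{N} q_{j+1}^i·E[(Kⁱ·Y_{j+1}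 − K)⁺]. -/
open MeasureTheory Filter Set Finset

/-- for a two-step nonnegative martingale `(Y_j, Y_{j+1})` with
`E[Y_j] = 1` and densities `q_{j+1} = P·q_j` related by a martingale transition
operator `P`, the mixed call prices are increasing in time. -/
theorem stmt_12 {Ω : Type*} {m0 : MeasurableSpace Ω} {μ : Measure Ω} [IsProbabilityMeasure μ]
    (𝒢 : MeasurableSpace Ω) (h𝒢 : 𝒢 ≤ m0)
    (Yj Yj1 : Ω → ℝ)
    (hYjnn : ∀ ω, 0 ≤ Yj ω) (hYj1nn : ∀ ω, 0 ≤ Yj1 ω)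
    (hYjint : Integrable Yj μ) (hYj1int : Integrable Yj1 μ)
    (hYjmeas : StronglyMeasurable[𝒢] Yj)
    (hmart : μ[Yj1|𝒢] =ᵐ[μ] Yj)
    (hmean : ∫ ω, Yj ω ∂μ = 1)
    {N : ℕ} (K : Fin N → ℝ) (hKpos : ∀ i, 0 < K i) (hKmono : StrictMono K)
    (P : Matrix (Fin N) (Fin N) ℝ)
    (hPnn : ∀ i l, 0 ≤ P i l)
    (hPcol : ∀ l, ∑ i, P i l = 1)
    (hPmart : ∀ l, ∑ i, K i * P i l = K l)
    (qj qj1 : Fin N → ℝ)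
    (hqjnn : ∀ i, 0 ≤ qj i) (hqjsum : ∑ i, qj i = 1)
    (hqj1nn : ∀ i, 0 ≤ qj1 i) (hqj1sum : ∑ i, qj1 i = 1)
    (hstep : qj1 = P.mulVec qj) :
    ∀ x, 0 ≤ x →
      ∑ i, qj i * ∫ ω, max (K i * Yj ω - x) 0 ∂μ ≤
        ∑ i, qj1 i * ∫ ω, max (K i * Yj1 ω - x) 0 ∂μ := by
  intro x hx
  -- integrability helpers
  have hint2 : ∀ c : ℝ, Integrable (fun ω => max (c * Yj1 ω - x) 0) μ := fun c =>
    ((hYj1int.const_mul c).sub (integrable_const x)).pos_part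
  have hint1 : ∀ c : ℝ, Integrable (fun ω => max (c * Yj ω - x) 0) μ := fun c =>
    ((hYjint.const_mul c).sub (integrable_const x)).pos_part
  -- Step 1: per-strike time monotonicity via conditional expectation
  have key1 : ∀ c : ℝ,
      ∫ ω, max (c * Yj ω - x) 0 ∂μ ≤ ∫ ω, max (c * Yj1 ω - x) 0 ∂μ := by
    intro c
    have hceq : μ[fun ω => c * Yj1 ω - x|𝒢] =ᵐ[μ] fun ω => c * Yj ω - x := by
      have h1 := condExp_sub (μ := μ) (m := 𝒢) (hYj1int.const_mul c) (integrable_const x)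
      have h2 : μ[fun ω => c * Yj1 ω|𝒢] =ᵐ[μ] fun ω => c * Yj ω := by
        have := condExp_smul (μ := μ) (m := 𝒢) c Yj1
        refine this.trans ?_
        filter_upwards [hmart] with ω hω
        simp [hω]
      have h3 : μ[fun _ : Ω => x|𝒢] = fun _ => x := condExp_const h𝒢 x
      refine h1.trans ?_
      filter_upwards [h2] with ω hω
      simp only [Pi.sub_apply, hω, h3]
    have hmono := condExp_mono (μ := μ) (m := 𝒢)
      ((hYj1int.const_mul c).sub (integrable_const x)) (hint2 c)
      (Eventually.of_forall fun ω => le_max_left _ _)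
    have hnn := condExp_nonneg (μ := μ) (m := 𝒢)
      (f := fun ω => max (c * Yj1 ω - x) 0)
      (Eventually.of_forall fun ω => le_max_right _ _)
    have hle : ∀ᵐ ω ∂μ, max (c * Yj ω - x) 0 ≤ (μ[fun ω => max (c * Yj1 ω - x) 0|𝒢]) ω := by
      filter_upwards [hceq, hmono, hnn] with ω h1 h2 h3
      exact max_le (h1 ▸ h2) h3
    calc ∫ ω, max (c * Yj ω - x) 0 ∂μ
        ≤ ∫ ω, (μ[fun ω => max (c * Yj1 ω - x) 0|𝒢]) ω ∂μ :=
          integral_mono_ae (hint1 c) integrable_condExp hle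
      _ = ∫ ω, max (c * Yj1 ω - x) 0 ∂μ := integral_condExp h𝒢
  -- Step 2: per-column convexity in the strike
  have key2 : ∀ l, ∫ ω, max (K l * Yj1 ω - x) 0 ∂μ ≤
      ∑ i, P i l * ∫ ω, max (K i * Yj1 ω - x) 0 ∂μ := by
    intro l
    have hpt : ∀ ω, max (K l * Yj1 ω - x) 0 ≤ ∑ i, P i l * max (K i * Yj1 ω - x) 0 := by
      intro ω
      refine max_le ?_ (Finset.sum_nonneg fun i _ =>
        mul_nonneg (hPnn i l) (le_max_right _ _))
      have h1 : ∑ i, P i l * (K i * Yj1 ω - x) ≤ ∑ i, P i l * max (K i * Yj1 ω - x) 0 :=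
        Finset.sum_le_sum fun i _ => mul_le_mul_of_nonneg_left (le_max_left _ _) (hPnn i l)
      have h2 : ∑ i, P i l * (K i * Yj1 ω - x) = K l * Yj1 ω - x := by
        have := hPmart l
        have := hPcol l
        calc ∑ i, P i l * (K i * Yj1 ω - x)
            = (∑ i, K i * P i l) * Yj1 ω - (∑ i, P i l) * x := by
              rw [Finset.sum_mul, Finset.sum_mul, ← Finset.sum_sub_distrib]
              exact Finset.sum_congr rfl fun i _ => by ring
          _ = K l * Yj1 ω - x := by rw [hPmart l, hPcol l, one_mul]
      linarith
    calc ∫ ω, max (K l * Yj1 ω - x) 0 ∂μ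
        ≤ ∫ ω, ∑ i, P i l * max (K i * Yj1 ω - x) 0 ∂μ := by
          refine integral_mono (hint2 (K l)) ?_ hpt
          exact integrable_finset_sum _ fun i _ => (hint2 (K i)).const_mul _
      _ = ∑ i, P i l * ∫ ω, max (K i * Yj1 ω - x) 0 ∂μ := by
          rw [integral_finset_sum _ fun i _ => (hint2 (K i)).const_mul _]
          exact Finset.sum_congr rfl fun i _ => integral_const_mul _ _
  -- combine
  calc ∑ i, qj i * ∫ ω, max (K i * Yj ω - x) 0 ∂μ
      ≤ ∑ i, qj i * ∫ ω, max (K i * Yj1 ω - x) 0 ∂μ :=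
        Finset.sum_le_sum fun i _ => mul_le_mul_of_nonneg_left (key1 (K i)) (hqjnn i)
    _ ≤ ∑ i, qj1 i * ∫ ω, max (K i * Yj1 ω - x) 0 ∂μ := by
        subst hstep
        have : ∑ i, (P.mulVec qj) i * ∫ ω, max (K i * Yj1 ω - x) 0 ∂μ
            = ∑ l, qj l * ∑ i, P i l * ∫ ω, max (K i * Yj1 ω - x) 0 ∂μ := by
          simp only [Matrix.mulVec, dotProduct, Finset.sum_mul, Finset.mul_sum]
          rw [Finset.sum_comm]
          exact Finset.sum_congr rfl fun l _ => Finset.sum_congr rfl fun i _ => by ring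
        rw [this]
        exact Finset.sum_le_sum fun l _ => mul_le_mul_of_nonneg_left (key2 l) (hqjnn l)
end

section
/- Let M ∈ ℝ^{N×N} be a matrix whose columns each sum to 1 (Σ_{i=1}^{N} M_{i,ℓ} = 1 for every ℓ) and whose off-diagonal entries are nonpositive (M_{i,ℓ} ≤ 0 for i ≠ ℓ). Then M is invertible, every entry of M⁻¹ is nonnegative, and every column of M⁻¹ sums to 1. Moreover, if additionally there is a vector K ∈ ℝᴺ with Σ_{i=1}^{N} Kⁱ·M_{i,ℓ} = K^ℓ for every ℓ, then Σ_{i=1}^{N} Kⁱ·(M⁻¹)_{i,ℓ} = K^ℓ for every ℓ. -/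
open Finset Matrix

attribute [local instance] Matrix.linftyOpNormedRing Matrix.linftyOpNormedAlgebra

private lemma entry_norm_le {n : ℕ} (A : Matrix (Fin n) (Fin n) ℝ) (i l : Fin n) :
    ‖A i l‖ ≤ ‖A‖ := by
  have h1 : ‖A i l‖₊ ≤ ‖A‖₊ := by
    rw [Matrix.linfty_opNNNorm_def]
    exact le_trans
      (Finset.single_le_sum (f := fun j => ‖A i j‖₊) (fun _ _ => zero_le) (Finset.mem_univ l))
      (Finset.le_sup (f := fun i => ∑ j, ‖A i j‖₊) (Finset.mem_univ i))
  exact h1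

private lemma geom_inv_nonneg {n : ℕ} (Q : Matrix (Fin n) (Fin n) ℝ)
    (hQ : ‖Q‖ < 1) (hnn : ∀ i l, 0 ≤ Q i l) (i l : Fin n) :
    0 ≤ Ring.inverse (1 - Q) i l := by
  have hs : HasSum (fun k : ℕ => Q ^ k) (Ring.inverse (1 - Q)) :=
    hasSum_geom_series_inverse Q hQ
  -- entry evaluation as continuous linear map
  let E : Matrix (Fin n) (Fin n) ℝ →L[ℝ] ℝ :=
    LinearMap.mkContinuous
      { toFun := fun A => A i l
        map_add' := fun _ _ => rfl
        map_smul' := fun _ _ => rfl } 1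
      (fun A => by rw [one_mul]; exact entry_norm_le A i l)
  have hs' : HasSum (fun k : ℕ => (Q ^ k) i l) (Ring.inverse (1 - Q) i l) :=
    E.hasSum hs
  have hpow : ∀ (k : ℕ) (a b : Fin n), 0 ≤ (Q ^ k) a b := by
    intro k
    induction k with
    | zero => intro a b; by_cases h : a = b <;>
        simp [pow_zero, Matrix.one_apply, h]
    | succ m ih =>
        intro a b
        rw [pow_succ, Matrix.mul_apply]
        exact Finset.sum_nonneg fun j _ => mul_nonneg (ih a j) (hnn j b)
  exact hasSum_le (fun k => hpow k i l) hasSum_zero hs'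

/-- a matrix with columns summing to 1 and nonpositive off-diagonal
entries is invertible, its inverse is nonnegative with columns summing to 1, and
the inverse inherits the martingale property `Σ_i Kⁱ M_{i,ℓ} = K^ℓ`. -/
theorem stmt_15 {N : ℕ} (M : Matrix (Fin N) (Fin N) ℝ)
    (hcol : ∀ l, ∑ i, M i l = 1)
    (hoff : ∀ i l, i ≠ l → M i l ≤ 0) :
    IsUnit M ∧
    (∀ i l, 0 ≤ M⁻¹ i l) ∧
    (∀ l, ∑ i, M⁻¹ i l = 1) ∧
    (∀ K : Fin N → ℝ, (∀ l, ∑ i, K i * M i l = K l) → ∀ l, ∑ i, K i * M⁻¹ i l = K l) := by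
  classical
  set d : Fin N → ℝ := fun i => M i i with hd_def
  have hsum_off : ∀ i, ∑ l ∈ univ.erase i, M l i = 1 - d i := by
    intro i
    have := Finset.sum_erase_add univ (fun l => M l i) (Finset.mem_univ i)
    rw [hcol i] at this
    linarith
  have hd : ∀ i, 1 ≤ d i := by
    intro i
    have h1 : ∑ l ∈ univ.erase i, M l i ≤ 0 :=
      Finset.sum_nonpos fun l hl => hoff l i (Finset.ne_of_mem_erase hl)
    have := hsum_off i
    linarith
  have hd0 : ∀ i, (0:ℝ) < d i := fun i => lt_of_lt_of_le one_pos (hd i)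
  set Q : Matrix (Fin N) (Fin N) ℝ :=
    Matrix.of (fun i l => if i = l then 0 else -M l i / d i) with hQ_def
  have hQnn : ∀ i l, 0 ≤ Q i l := by
    intro i l
    simp only [hQ_def, Matrix.of_apply]
    split_ifs with h
    · exact le_refl 0
    · exact div_nonneg (neg_nonneg.2 (hoff l i fun e => h e.symm)) (hd0 i).le
  have hrow : ∀ i, ∑ l, Q i l = 1 - (d i)⁻¹ := by
    intro i
    have h1 : ∑ l, Q i l = ∑ l ∈ univ.erase i, (-M l i / d i) := by
      rw [← Finset.sum_erase_add univ _ (Finset.mem_univ i)]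
      have h0 : Q i i = 0 := by simp [hQ_def]
      rw [h0, add_zero]
      refine Finset.sum_congr rfl fun l hl => ?_
      have hne : i ≠ l := fun e => (Finset.ne_of_mem_erase hl) e.symm
      simp [hQ_def, hne]
    have h2 : ∑ l ∈ univ.erase i, -M l i = d i - 1 := by
      rw [Finset.sum_neg_distrib, hsum_off i]; ring
    rw [h1, ← Finset.sum_div, h2, sub_div, div_self (hd0 i).ne', one_div]
  have hQnorm : ‖Q‖ < 1 := by
    have : ‖Q‖₊ < 1 := by
      rw [Matrix.linfty_opNNNorm_def]
      refine Finset.sup_lt_iff (show (⊥:NNReal) < 1 by norm_num) |>.2 fun i _ => ?_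
      have hcoe : ((∑ l, ‖Q i l‖₊ : NNReal) : ℝ) = ∑ l, Q i l := by
        push_cast
        exact Finset.sum_congr rfl fun l _ => Real.norm_of_nonneg (hQnn i l)
      rw [← NNReal.coe_lt_coe, hcoe, NNReal.coe_one, hrow i]
      have := hd0 i
      have h1 : 0 < (d i)⁻¹ := by positivity
      linarith
    exact this
  have hfact : Mᵀ = Matrix.diagonal d * (1 - Q) := by
    ext i l
    rw [Matrix.mul_apply]
    rw [Finset.sum_eq_single i (fun j _ hj => by
      simp [Matrix.diagonal_apply_ne' d hj]) (fun h => absurd (Finset.mem_univ i) h)]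
    simp only [Matrix.diagonal_apply_eq, Matrix.sub_apply, Matrix.one_apply, hQ_def,
      Matrix.of_apply, Matrix.transpose_apply]
    by_cases h : i = l
    · subst h; simp; rfl
    · rw [if_neg h, if_neg h]
      field_simp
      simp only [zero_sub, neg_neg]
      exact (mul_div_cancel₀ _ (hd0 i).ne').symm
  have hUsub : IsUnit ((1 : Matrix (Fin N) (Fin N) ℝ) - Q) :=
    isUnit_one_sub_of_norm_lt_one hQnorm
  have hUdiag : IsUnit (Matrix.diagonal d) := by
    rw [Matrix.isUnit_iff_isUnit_det, Matrix.det_diagonal]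
    exact isUnit_iff_ne_zero.2 (Finset.prod_ne_zero_iff.2 fun i _ => (hd0 i).ne')
  have hUT : IsUnit Mᵀ := by rw [hfact]; exact hUdiag.mul hUsub
  have hUM : IsUnit M := by
    rw [Matrix.isUnit_iff_isUnit_det]
    rw [Matrix.isUnit_iff_isUnit_det, Matrix.det_transpose] at hUT
    exact hUT
  have hdet : IsUnit M.det := (Matrix.isUnit_iff_isUnit_det M).1 hUM
  -- inverse nonnegativity
  have hinv_nn : ∀ i l, 0 ≤ M⁻¹ i l := by
    intro i l
    have h1 : M⁻¹ i l = Mᵀ⁻¹ l i := by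
      rw [← Matrix.transpose_nonsing_inv]; rfl
    have hdiaginv : (Matrix.diagonal d)⁻¹ = Matrix.diagonal (fun i => (d i)⁻¹) :=
      Matrix.inv_eq_right_inv (by
        rw [Matrix.diagonal_mul_diagonal,
          show (fun i => d i * (d i)⁻¹) = (1 : Fin N → ℝ) from
            funext fun j => mul_inv_cancel₀ (hd0 j).ne']
        exact Matrix.diagonal_one)
    rw [h1, hfact, Matrix.mul_inv_rev, hdiaginv]
    rw [Matrix.mul_apply]
    refine Finset.sum_nonneg fun j _ => mul_nonneg ?_ ?_
    · rw [Matrix.nonsing_inv_eq_ringInverse]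
      exact geom_inv_nonneg Q hQnorm hQnn l j
    · rcases eq_or_ne j i with rfl | h
      · rw [Matrix.diagonal_apply_eq]
        exact inv_nonneg.2 (hd0 _).le
      · rw [Matrix.diagonal_apply_ne _ h]
  have hMMinv : M * M⁻¹ = 1 := Matrix.mul_nonsing_inv M hdet
  have hvec : ∀ K : Fin N → ℝ, (∀ l, ∑ i, K i * M i l = K l) →
      ∀ l, ∑ i, K i * M⁻¹ i l = K l := by
    intro K hK l
    have hv : K ᵥ* M = K := by
      funext j
      rw [← hK j]
      simp [Matrix.vecMul, dotProduct]
    have : K ᵥ* M⁻¹ = K := by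
      calc K ᵥ* M⁻¹ = (K ᵥ* M) ᵥ* M⁻¹ := by rw [hv]
        _ = K ᵥ* (M * M⁻¹) := by rw [Matrix.vecMul_vecMul]
        _ = K := by rw [hMMinv, Matrix.vecMul_one]
    have := congrFun this l
    simpa [Matrix.vecMul, dotProduct] using this
  refine ⟨hUM, hinv_nn, ?_, hvec⟩
  intro l
  have := hvec (fun _ => 1) (fun l' => by simpa using hcol l') l
  simpa using this
end

section
/- Let 0 < K¹ < ⋯ < Kᴺ be real numbers, let T_{j−1} < T_j, and let Σ², …, Σ^{N−1} be nonnegative reals (discrete local volatilities). Define γ^{i+} := 1/((½(K^{i+1} − K^{i−1}))·(K^{i+1} − Kⁱ)) and γ^{i−} := 1/((½(K^{i+1} − K^{i−1}))·(Kⁱ − K^{i−1})), and w^{i±} := ½·(Σⁱ·Kⁱ)²·(T_j − T_{j−1})·γ^{i±} for 2 ≤ i ≤ N−1, with w^{1±} = w^{N±} := 0. Let M ∈ ℝ^{N×N} be the tridiagonal matrix whose column ℓ has diagonal entry 1 + w^{ℓ−} + w^{ℓ+}, entry −w^{ℓ−} in row ℓ−1, entry −w^{ℓ+} in row ℓ+1,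 and zeros elsewhere. Then M is invertible and Q := M⁻¹ is a martingale transition operator with respect to K = (K¹,…,Kᴺ): Q has nonnegative entries, each column of Q sums to 1, and Σ_{i=1}^{N} Kⁱ·Q_{i,ℓ} = K^ℓ for every ℓ. -/
open Finset
open Matrix

/-- the inverse of the tridiagonal implicit matrix built from
discrete local volatilities `Σⁱ ≥ 0` is a martingale transition operator with
respect to the strikes `0 < K¹ < ⋯ < Kᴺ`.  The `Fin N` index `i` corresponds to
label `i+1 ∈ {1,…,N}`. -/
theorem stmt_17 {N : ℕ} (K : ℕ → ℝ) (Tprev Tcur : ℝ) (hT : Tprev < Tcur)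
    (Sig : ℕ → ℝ)
    (hKpos : 0 < K 1) (hKmono : ∀ i, 1 ≤ i → i < N → K i < K (i + 1))
    (hSig : ∀ i, 2 ≤ i → i ≤ N - 1 → 0 ≤ Sig i)
    (gp gm wp wm : ℕ → ℝ)
    (hgp : ∀ i, 2 ≤ i → i ≤ N - 1 →
      gp i = 1 / ((1 / 2 * (K (i + 1) - K (i - 1))) * (K (i + 1) - K i)))
    (hgm : ∀ i, 2 ≤ i → i ≤ N - 1 →
      gm i = 1 / ((1 / 2 * (K (i + 1) - K (i - 1))) * (K i - K (i - 1))))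
    (hwp : ∀ i, 2 ≤ i → i ≤ N - 1 →
      wp i = 1 / 2 * (Sig i * K i) ^ 2 * (Tcur - Tprev) * gp i)
    (hwm : ∀ i, 2 ≤ i → i ≤ N - 1 →
      wm i = 1 / 2 * (Sig i * K i) ^ 2 * (Tcur - Tprev) * gm i)
    (hwp1 : wp 1 = 0) (hwm1 : wm 1 = 0) (hwpN : wp N = 0) (hwmN : wm N = 0)
    (M : Matrix (Fin N) (Fin N) ℝ)
    (hM : ∀ i l : Fin N,
      M i l = if (i : ℕ) = (l : ℕ) then 1 + wm ((l : ℕ) + 1) + wp ((l : ℕ) + 1)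
              else if (i : ℕ) + 1 = (l : ℕ) then -(wm ((l : ℕ) + 1))
              else if (i : ℕ) = (l : ℕ) + 1 then -(wp ((l : ℕ) + 1))
              else 0) :
    IsUnit M ∧
    (∀ i l, 0 ≤ M⁻¹ i l) ∧
    (∀ l, ∑ i, M⁻¹ i l = 1) ∧
    (∀ l : Fin N, ∑ i : Fin N, K ((i : ℕ) + 1) * M⁻¹ i l = K ((l : ℕ) + 1)) := by
  -- monotonicity chains
  have hKlt : ∀ m, 2 ≤ m → m ≤ N - 1 → K (m - 1) < K m ∧ K m < K (m + 1) := by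
    intro m hm2 hmN
    obtain ⟨k, rfl⟩ : ∃ k, m = k + 2 := ⟨m - 2, by omega⟩
    have h1 : K (k + 1) < K (k + 2) := hKmono (k + 1) (by omega) (by omega)
    have h2 : K (k + 2) < K (k + 3) := hKmono (k + 2) (by omega) (by omega)
    constructor
    · simpa using h1
    · simpa using h2
  -- nonnegativity of the weights
  have hwm_nonneg : ∀ m, 1 ≤ m → m ≤ N → 0 ≤ wm m := by
    intro m hm1 hmN
    rcases eq_or_lt_of_le hm1 with h | h
    · rw [← h, hwm1]
    rcases eq_or_lt_of_le hmN with h' | h'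
    · rw [h', hwmN]
    have hm2 : 2 ≤ m := h
    have hmN1 : m ≤ N - 1 := by omega
    obtain ⟨hlt1, hlt2⟩ := hKlt m hm2 hmN1
    rw [hwm m hm2 hmN1, hgm m hm2 hmN1]
    have hd : 0 < (1 / 2 * (K (m + 1) - K (m - 1))) * (K m - K (m - 1)) := by
      have : K (m - 1) < K (m + 1) := hlt1.trans hlt2
      have h1 : 0 < 1 / 2 * (K (m + 1) - K (m - 1)) := by linarith
      have h2 : 0 < K m - K (m - 1) := by linarith
      positivity
    have ht : (0:ℝ) < Tcur - Tprev := by linarith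
    have h1 : (0:ℝ) ≤ (Sig m * K m) ^ 2 := sq_nonneg _
    have h2 : (0:ℝ) ≤ 1 / ((1 / 2 * (K (m + 1) - K (m - 1))) * (K m - K (m - 1))) :=
      le_of_lt (by positivity)
    have : (0:ℝ) ≤ 1 / 2 * (Sig m * K m) ^ 2 * (Tcur - Tprev) :=
      mul_nonneg (mul_nonneg (by norm_num) h1) ht.le
    exact mul_nonneg this h2
  have hwp_nonneg : ∀ m, 1 ≤ m → m ≤ N → 0 ≤ wp m := by
    intro m hm1 hmN
    rcases eq_or_lt_of_le hm1 with h | h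
    · rw [← h, hwp1]
    rcases eq_or_lt_of_le hmN with h' | h'
    · rw [h', hwpN]
    have hm2 : 2 ≤ m := h
    have hmN1 : m ≤ N - 1 := by omega
    obtain ⟨hlt1, hlt2⟩ := hKlt m hm2 hmN1
    rw [hwp m hm2 hmN1, hgp m hm2 hmN1]
    have hd : 0 < (1 / 2 * (K (m + 1) - K (m - 1))) * (K (m + 1) - K m) := by
      have : K (m - 1) < K (m + 1) := hlt1.trans hlt2
      have h1 : 0 < 1 / 2 * (K (m + 1) - K (m - 1)) := by linarith
      have h2 : 0 < K (m + 1) - K m := by linarith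
      positivity
    have ht : (0:ℝ) < Tcur - Tprev := by linarith
    have h1 : (0:ℝ) ≤ (Sig m * K m) ^ 2 := sq_nonneg _
    have h2 : (0:ℝ) ≤ 1 / ((1 / 2 * (K (m + 1) - K (m - 1))) * (K (m + 1) - K m)) :=
      le_of_lt (by positivity)
    have : (0:ℝ) ≤ 1 / 2 * (Sig m * K m) ^ 2 * (Tcur - Tprev) :=
      mul_nonneg (mul_nonneg (by norm_num) h1) ht.le
    exact mul_nonneg this h2
  -- the master sum formula for columns of M
  have master : ∀ (c : ℕ → ℝ) (l : Fin N),
      ∑ i : Fin N, c ((i : ℕ) + 1) * M i l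
        = c ((l : ℕ) + 1) + wm ((l : ℕ) + 1) * (c ((l : ℕ) + 1) - c (l : ℕ))
          + wp ((l : ℕ) + 1) * (c ((l : ℕ) + 1) - c ((l : ℕ) + 2)) := by
    intro c l
    have summand : ∀ i : Fin N, c ((i : ℕ) + 1) * M i l
        = (if i = l then (1 + wm ((l : ℕ) + 1) + wp ((l : ℕ) + 1)) * c ((l : ℕ) + 1) else 0)
          + (if (i : ℕ) + 1 = (l : ℕ) then -(wm ((l : ℕ) + 1)) * c (l : ℕ) else 0)
          + (if (i : ℕ) = (l : ℕ) + 1 then -(wp ((l : ℕ) + 1)) * c ((l : ℕ) + 2) else 0) := by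
      intro i
      rw [hM]
      by_cases h1 : (i : ℕ) = (l : ℕ)
      · have hi : i = l := Fin.ext h1
        subst hi
        rw [if_pos rfl, if_pos rfl, if_neg (by omega), if_neg (by omega)]
        ring
      · have hi : i ≠ l := fun h => h1 (by rw [h])
        rw [if_neg h1, if_neg hi]
        by_cases h2 : (i : ℕ) + 1 = (l : ℕ)
        · rw [if_pos h2, if_pos h2, if_neg (by omega)]
          have : (i : ℕ) + 1 = (l : ℕ) := h2
          rw [← this]
          ring
        · rw [if_neg h2, if_neg h2]
          by_cases h3 : (i : ℕ) = (l : ℕ) + 1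
          · rw [if_pos h3, if_pos h3]
            rw [h3]
            ring
          · rw [if_neg h3, if_neg h3]
            ring
    rw [Finset.sum_congr rfl (fun i _ => summand i)]
    rw [Finset.sum_add_distrib, Finset.sum_add_distrib]
    have S0 : ∑ i : Fin N, (if i = l then
        (1 + wm ((l : ℕ) + 1) + wp ((l : ℕ) + 1)) * c ((l : ℕ) + 1) else 0)
        = (1 + wm ((l : ℕ) + 1) + wp ((l : ℕ) + 1)) * c ((l : ℕ) + 1) := by
      rw [Finset.sum_ite_eq' Finset.univ l]; exact if_pos (Finset.mem_univ _)
    have S1 : ∑ i : Fin N, (if (i : ℕ) + 1 = (l : ℕ) then -(wm ((l : ℕ) + 1)) * c (l : ℕ) else 0)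
        = -(wm ((l : ℕ) + 1)) * c (l : ℕ) ∨
        (∑ i : Fin N, (if (i : ℕ) + 1 = (l : ℕ) then -(wm ((l : ℕ) + 1)) * c (l : ℕ) else 0) = 0
          ∧ wm ((l : ℕ) + 1) = 0) := by
      by_cases hl : (l : ℕ) = 0
      · right
        constructor
        · apply Finset.sum_eq_zero
          intro i _
          rw [if_neg (by omega)]
        · rw [hl]; exact hwm1
      · left
        have hlt : (l : ℕ) - 1 < N := by have := l.isLt; omega
        have : ∀ i : Fin N, ((i : ℕ) + 1 = (l : ℕ)) ↔ i = ⟨(l : ℕ) - 1, hlt⟩ := by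
          intro i
          constructor
          · intro h; apply Fin.ext; simp; omega
          · intro h; subst h; simp; omega
        rw [Finset.sum_congr rfl (fun i _ => by rw [if_congr (this i) rfl rfl])]
        rw [Finset.sum_ite_eq' Finset.univ]; exact if_pos (Finset.mem_univ _)
    have S2 : ∑ i : Fin N, (if (i : ℕ) = (l : ℕ) + 1 then
          -(wp ((l : ℕ) + 1)) * c ((l : ℕ) + 2) else 0)
        = -(wp ((l : ℕ) + 1)) * c ((l : ℕ) + 2) ∨
        (∑ i : Fin N, (if (i : ℕ) = (l : ℕ) + 1 then
          -(wp ((l : ℕ) + 1)) * c ((l : ℕ) + 2) else 0) = 0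
          ∧ wp ((l : ℕ) + 1) = 0) := by
      by_cases hl : (l : ℕ) + 1 < N
      · left
        have : ∀ i : Fin N, ((i : ℕ) = (l : ℕ) + 1) ↔ i = ⟨(l : ℕ) + 1, hl⟩ := by
          intro i
          constructor
          · intro h; apply Fin.ext; simpa using h
          · intro h; subst h; simp
        rw [Finset.sum_congr rfl (fun i _ => by rw [if_congr (this i) rfl rfl])]
        rw [Finset.sum_ite_eq' Finset.univ]; exact if_pos (Finset.mem_univ _)
      · right
        constructor
        · apply Finset.sum_eq_zero
          intro i _
          rw [if_neg (by have := i.isLt; omega)]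
        · have : (l : ℕ) + 1 = N := by have := l.isLt; omega
          rw [this]; exact hwpN
    rw [S0]
    rcases S1 with h1 | ⟨h1, h1'⟩ <;> rcases S2 with h2 | ⟨h2, h2'⟩
    · rw [h1, h2]; ring
    · rw [h1, h2, h2']; ring
    · rw [h1, h2, h1']; ring
    · rw [h1, h2, h1', h2']; ring
  -- key positivity lemma:
  have nonneg_of : ∀ y : Fin N → ℝ, (∀ l : Fin N, 0 ≤ ∑ i, y i * M i l) → ∀ i, 0 ≤ y i := by
    intro y hy
    by_contra hcon
    push_neg at hcon
    obtain ⟨i0, hi0⟩ := hcon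
    obtain ⟨l, -, hmin⟩ := Finset.exists_min_image Finset.univ y ⟨i0, Finset.mem_univ i0⟩
    have hyl : y l < 0 := lt_of_le_of_lt (hmin i0 (Finset.mem_univ i0)) hi0
    -- extend y to labels
    set Y : ℕ → ℝ := fun m => if h : 1 ≤ m ∧ m - 1 < N then y ⟨m - 1, h.2⟩ else 0 with hY
    have hYi : ∀ i : Fin N, Y ((i : ℕ) + 1) = y i := by
      intro i
      have h : 1 ≤ (i : ℕ) + 1 ∧ (i : ℕ) + 1 - 1 < N := ⟨by omega, by simpa using i.isLt⟩
      simp only [hY, dif_pos h]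
      congr 1
    have hsum := master Y l
    rw [Finset.sum_congr rfl (fun i _ => by rw [hYi i])] at hsum
    have h0 := hy l
    rw [hsum] at h0
    rw [hYi l] at h0
    have hwm0 : 0 ≤ wm ((l : ℕ) + 1) := hwm_nonneg _ (by omega) (by have := l.isLt; omega)
    have hwp0 : 0 ≤ wp ((l : ℕ) + 1) := hwp_nonneg _ (by omega) (by have := l.isLt; omega)
    have t1 : wm ((l : ℕ) + 1) * (y l - Y (l : ℕ)) ≤ 0 := by
      by_cases hl : (l : ℕ) = 0
      · have : wm ((l : ℕ) + 1) = 0 := by rw [hl]; exact hwm1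
        rw [this, zero_mul]
      · have hlt : (l : ℕ) - 1 < N := by have := l.isLt; omega
        have hYl : Y (l : ℕ) = y ⟨(l : ℕ) - 1, hlt⟩ := by
          simp only [hY, dif_pos (⟨by omega, hlt⟩ : 1 ≤ (l : ℕ) ∧ (l : ℕ) - 1 < N)]
        rw [hYl]
        have : y l ≤ y ⟨(l : ℕ) - 1, hlt⟩ := hmin _ (Finset.mem_univ _)
        have : y l - y ⟨(l : ℕ) - 1, hlt⟩ ≤ 0 := by linarith
        exact mul_nonpos_of_nonneg_of_nonpos hwm0 this
    have t2 : wp ((l : ℕ) + 1) * (y l - Y ((l : ℕ) + 2)) ≤ 0 := by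
      by_cases hl : (l : ℕ) + 1 < N
      · have hYl : Y ((l : ℕ) + 2) = y ⟨(l : ℕ) + 1, hl⟩ := by
          have h : 1 ≤ (l : ℕ) + 2 ∧ (l : ℕ) + 2 - 1 < N := ⟨by omega, by omega⟩
          simp only [hY, dif_pos h]
          congr 1
        rw [hYl]
        have : y l ≤ y ⟨(l : ℕ) + 1, hl⟩ := hmin _ (Finset.mem_univ _)
        have : y l - y ⟨(l : ℕ) + 1, hl⟩ ≤ 0 := by linarith
        exact mul_nonpos_of_nonneg_of_nonpos hwp0 this
      · have hN : (l : ℕ) + 1 = N := by have := l.isLt; omega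
        have : wp ((l : ℕ) + 1) = 0 := by rw [hN]; exact hwpN
        rw [this, zero_mul]
    linarith
  -- vecMul expansion
  have hvm : ∀ (A : Matrix (Fin N) (Fin N) ℝ) (y : Fin N → ℝ) (l : Fin N),
      (y ᵥ* A) l = ∑ i, y i * A i l := by
    intro A y l
    simp [Matrix.vecMul, dotProduct]
  -- invertibility
  have hunit : IsUnit M := by
    rw [← Matrix.vecMul_injective_iff_isUnit]
    intro a b hab
    have key : ∀ u v : Fin N → ℝ, u ᵥ* M = v ᵥ* M → ∀ i, 0 ≤ v i - u i := by
      intro u v huv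
      apply nonneg_of
      intro l
      have : ∑ i, (v i - u i) * M i l = (v ᵥ* M) l - (u ᵥ* M) l := by
        rw [hvm, hvm, ← Finset.sum_sub_distrib]
        apply Finset.sum_congr rfl
        intro i _
        ring
      rw [this, huv]
      simp
    funext i
    have h1 := key a b hab i
    have h2 := key b a hab.symm i
    linarith
  have hMMinv : M * M⁻¹ = 1 := Matrix.mul_nonsing_inv M ((Matrix.isUnit_iff_isUnit_det M).mp hunit)
  have hMinvM : M⁻¹ * M = 1 := Matrix.nonsing_inv_mul M ((Matrix.isUnit_iff_isUnit_det M).mp hunit)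
  refine ⟨hunit, ?_, ?_, ?_⟩
  · -- nonnegativity of the inverse
    intro i l
    have : ∀ j, 0 ≤ M⁻¹ i j := by
      apply nonneg_of
      intro l'
      have : ∑ k, M⁻¹ i k * M k l' = (M⁻¹ * M) i l' := by
        rw [Matrix.mul_apply]
      rw [this, hMinvM]
      by_cases h : i = l'
      · subst h; simp
      · simp [Matrix.one_apply_ne h]
    exact this l
  · -- column sums
    intro l
    have h1M : (fun _ : Fin N => (1 : ℝ)) ᵥ* M = fun _ => 1 := by
      funext l'
      rw [hvm]
      have := master (fun _ => (1 : ℝ)) l'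
      simpa using this
    have : (fun _ : Fin N => (1 : ℝ)) ᵥ* M⁻¹ = fun _ => 1 := by
      have := Matrix.vecMul_vecMul (fun _ : Fin N => (1 : ℝ)) M M⁻¹
      rw [h1M, hMMinv, Matrix.vecMul_one] at this
      exact this
    have h2 := congr_fun this l
    rw [hvm] at h2
    simpa using h2
  · -- martingale property
    intro l
    set v : Fin N → ℝ := fun i => K ((i : ℕ) + 1) with hv
    have hKM : v ᵥ* M = v := by
      funext l'
      rw [hvm]
      have hm := master K l'
      rw [hm]
      -- show the correction terms vanish
      have key : wm ((l' : ℕ) + 1) * (K ((l' : ℕ) + 1) - K (l' : ℕ))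
          + wp ((l' : ℕ) + 1) * (K ((l' : ℕ) + 1) - K ((l' : ℕ) + 2)) = 0 := by
        set m := (l' : ℕ) + 1 with hmdef
        have hm1 : 1 ≤ m := by omega
        have hmN : m ≤ N := by have := l'.isLt; omega
        have hml : (l' : ℕ) = m - 1 := by omega
        have hml2 : (l' : ℕ) + 2 = m + 1 := by omega
        rw [hml2, hml]
        rcases eq_or_lt_of_le hm1 with h | h
        · rw [← h, hwm1, hwp1]; ring
        rcases eq_or_lt_of_le hmN with h' | h'
        · rw [h', hwmN, hwpN]; ring
        have hm2 : 2 ≤ m := h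
        have hmN1 : m ≤ N - 1 := by omega
        obtain ⟨hlt1, hlt2⟩ := hKlt m hm2 hmN1
        rw [hwm m hm2 hmN1, hwp m hm2 hmN1, hgm m hm2 hmN1, hgp m hm2 hmN1]
        have d1 : K m - K (m - 1) ≠ 0 := by linarith
        have d2 : K (m + 1) - K m ≠ 0 := by linarith
        have d3 : K (m + 1) - K (m - 1) ≠ 0 := by
          have := hlt1.trans hlt2; linarith
        have e1 : (1 / ((1 / 2 * (K (m + 1) - K (m - 1))) * (K m - K (m - 1))))
            * (K m - K (m - 1)) = 1 / (1 / 2 * (K (m + 1) - K (m - 1))) := by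
          rw [one_div, mul_inv, mul_assoc, inv_mul_cancel₀ d1, mul_one]
          simp [one_div]
        have e2 : (1 / ((1 / 2 * (K (m + 1) - K (m - 1))) * (K (m + 1) - K m)))
            * (K m - K (m + 1)) = -(1 / (1 / 2 * (K (m + 1) - K (m - 1)))) := by
          have hneg : K m - K (m + 1) = -(K (m + 1) - K m) := by ring
          rw [hneg, one_div, mul_inv, mul_neg, mul_assoc, inv_mul_cancel₀ d2, mul_one]
          simp [one_div]
        linear_combination (1 / 2 * (Sig m * K m) ^ 2 * (Tcur - Tprev)) * e1
          + (1 / 2 * (Sig m * K m) ^ 2 * (Tcur - Tprev)) * e2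
      linarith [key]
    have : v ᵥ* M⁻¹ = v := by
      have := Matrix.vecMul_vecMul v M M⁻¹
      rw [hKM, hMMinv, Matrix.vecMul_one] at this
      exact this
    have h2 := congr_fun this l
    rw [hvm] at h2
    exact h2
end

section
/- Let 0 = K⁰ < K¹ < ⋯ < Kᴺ be real numbers and let C_{j−1}^i, C_j^i (0 ≤ i ≤ N) be real numbers satisfying C_{j−1}^0 = C_j^0 = 1, C_{j−1}^1 = C_j^1 = 1 − K¹, and C_{j−1}^N = C_j^N = 0. Define dC_j^i := (C_j^{i+1} − C_j^i)/(K^{i+1} − Kⁱ) for 0 ≤ i ≤ N−1 and dC_j^N := 0, and similarly for j−1; set p_j^i := dC_j^i − dC_j^{i−1} and p_{j−1}^i := dC_{j−1}^i − dC_{j−1}^{i−1} for 1 ≤ i ≤ N. Assume p_j^i > 0 for 2 ≤ i ≤ N−1. Define w^{i+} := ((C_j^i − C_{j−1}^i)/p_j^i)·(1/(K^{i+1} − Kⁱ)) and w^{i−} := ((C_j^i − C_{j−1}^i)/p_j^i)·(1/(Kⁱ − K^{i−1})) for 2 ≤ i ≤ N−1, with w^{1±} = w^{N±} := 0, and let M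 ∈ ℝ^{N×N} be the tridiagonal matrix whose column ℓ has diagonal entry 1 + w^{ℓ−} + w^{ℓ+}, entry −w^{ℓ−} in row ℓ−1, entry −w^{ℓ+} in row ℓ+1, and zeros elsewhere. Then M·p_j = p_{j−1}, where p_j = (p_j^1, …, p_j^N) and p_{j−1} = (p_{j−1}^1, …, p_{j−1}^N). -/
open Finset

/-- the tridiagonal implicit matrix built from the self-consistent
weights `w^{i±} = ((C_j^i - C_{j-1}^i)/p_j^i)·(1/(K^{i±1} ∓ Kⁱ))` maps the density
`p_j` of expiry `j` back to the density `p_{j-1}` of expiry `j-1`: `M·p_j = p_{j-1}`.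
Here `Cp, dCp, pp` denote the data at expiry `j-1` and `Cc, dCc, pc` those at
expiry `j`; indices run over `1,…,N`. -/
theorem stmt_18 {N : ℕ} (K : ℕ → ℝ) (Cp Cc : ℕ → ℝ)
    (hK0 : K 0 = 0) (hKmono : ∀ i < N, K i < K (i + 1))
    (hCp0 : Cp 0 = 1) (hCc0 : Cc 0 = 1)
    (hCp1 : Cp 1 = 1 - K 1) (hCc1 : Cc 1 = 1 - K 1)
    (hCpN : Cp N = 0) (hCcN : Cc N = 0)
    (dCp dCc : ℕ → ℝ)
    (hdCp : ∀ i < N, dCp i = (Cp (i + 1) - Cp i) / (K (i + 1) - K i)) (hdCpN : dCp N = 0)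
    (hdCc : ∀ i < N, dCc i = (Cc (i + 1) - Cc i) / (K (i + 1) - K i)) (hdCcN : dCc N = 0)
    (pp pc : ℕ → ℝ)
    (hpp : ∀ i, 1 ≤ i → i ≤ N → pp i = dCp i - dCp (i - 1))
    (hpc : ∀ i, 1 ≤ i → i ≤ N → pc i = dCc i - dCc (i - 1))
    (hpcpos : ∀ i, 2 ≤ i → i ≤ N - 1 → 0 < pc i)
    (wp wm : ℕ → ℝ)
    (hwp : ∀ i, 2 ≤ i → i ≤ N - 1 →
      wp i = ((Cc i - Cp i) / pc i) * (1 / (K (i + 1) - K i)))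
    (hwm : ∀ i, 2 ≤ i → i ≤ N - 1 →
      wm i = ((Cc i - Cp i) / pc i) * (1 / (K i - K (i - 1))))
    (hwp1 : wp 1 = 0) (hwm1 : wm 1 = 0) (hwpN : wp N = 0) (hwmN : wm N = 0)
    (M : ℕ → ℕ → ℝ)
    (hM : ∀ i l, 1 ≤ i → i ≤ N → 1 ≤ l → l ≤ N →
      M i l = if i = l then 1 + wm l + wp l
              else if i + 1 = l then -(wm l)
              else if i = l + 1 then -(wp l)
              else 0) :
    ∀ i, 1 ≤ i → i ≤ N → ∑ l ∈ Finset.Icc 1 N, M i l * pc l = pp i := by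
  intro i hi1 hiN
  -- nonzero denominators
  have hne : ∀ k, k < N → K (k + 1) - K k ≠ 0 :=
    fun k hk => (sub_pos.mpr (hKmono k hk)).ne'
  -- difference data
  have hD0 : Cc 0 - Cp 0 = 0 := by rw [hCc0, hCp0]; ring
  have hD1 : Cc 1 - Cp 1 = 0 := by rw [hCc1, hCp1]; ring
  have hDN : Cc N - Cp N = 0 := by rw [hCcN, hCpN]; ring
  -- products wm k * pc k and wp k * pc k
  have hT : ∀ k, 1 ≤ k → k ≤ N → wm k * pc k = (Cc k - Cp k) / (K k - K (k - 1)) := by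
    intro k h1 h2
    rcases eq_or_ne k 1 with rfl | hk1
    · rw [hwm1, hD1]; simp
    rcases eq_or_ne k N with rfl | hkN
    · rw [hwmN, hDN]; simp
    have h2' : 2 ≤ k := by omega
    have h3' : k ≤ N - 1 := by omega
    have hpcne : pc k ≠ 0 := (hpcpos k h2' h3').ne'
    have hjd : K k - K (k - 1) ≠ 0 := by
      have := hne (k - 1) (by omega)
      rwa [show k - 1 + 1 = k from by omega] at this
    rw [hwm k h2' h3']
    field_simp
  have hS : ∀ k, 1 ≤ k → k < N → wp k * pc k = (Cc k - Cp k) / (K (k + 1) - K k) := by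
    intro k h1 h2
    rcases eq_or_ne k 1 with rfl | hk1
    · rw [hwp1, hD1]; simp
    have h2' : 2 ≤ k := by omega
    have h3' : k ≤ N - 1 := by omega
    have hpcne : pc k ≠ 0 := (hpcpos k h2' h3').ne'
    have hjd : K (k + 1) - K k ≠ 0 := hne k h2
    rw [hwp k h2' h3']
    field_simp
  -- the difference of slopes
  have hE : ∀ k, k < N → dCc k - dCp k =
      (Cc (k + 1) - Cp (k + 1)) / (K (k + 1) - K k) - (Cc k - Cp k) / (K (k + 1) - K k) := by
    intro k hk
    rw [hdCc k hk, hdCp k hk]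
    ring
  have key : pp i = pc i - (dCc i - dCp i) + (dCc (i - 1) - dCp (i - 1)) := by
    rw [hpp i hi1 hiN, hpc i hi1 hiN]; ring
  have hEm : dCc (i - 1) - dCp (i - 1) =
      (Cc i - Cp i) / (K i - K (i - 1)) - (Cc (i - 1) - Cp (i - 1)) / (K i - K (i - 1)) := by
    have h := hE (i - 1) (by omega)
    rwa [show i - 1 + 1 = i from by omega] at h
  -- reduce the sum to three terms
  have hsum : ∑ l ∈ Finset.Icc 1 N, M i l * pc l =
      ∑ l ∈ Finset.Icc 1 N, ((if i = l then (1 + wm i + wp i) * pc i else 0)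
        + (if i + 1 = l then -(wm (i + 1)) * pc (i + 1) else 0)
        + (if i - 1 = l then -(wp (i - 1)) * pc (i - 1) else 0)) := by
    apply Finset.sum_congr rfl
    intro l hl
    simp only [Finset.mem_Icc] at hl
    rw [hM i l hi1 hiN hl.1 hl.2]
    by_cases h1 : i = l
    · have hn2 : ¬(i + 1 = l) := by omega
      have hn3 : ¬(i - 1 = l) := by omega
      rw [if_pos h1, if_pos h1, if_neg hn2, if_neg hn3]
      subst h1; ring
    · rw [if_neg h1, if_neg h1]
      by_cases h2 : i + 1 = l
      · have hn3 : ¬(i = l + 1) := by omega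
        have hn3' : ¬(i - 1 = l) := by omega
        rw [if_pos h2, if_pos h2, if_neg hn3']
        subst h2; ring
      · rw [if_neg h2, if_neg h2]
        by_cases h3 : i = l + 1
        · have h3' : i - 1 = l := by omega
          rw [if_pos h3, if_pos h3', h3']
          ring
        · have hn3' : ¬(i - 1 = l) := by omega
          rw [if_neg h3, if_neg hn3']
          ring
  rw [hsum, Finset.sum_add_distrib, Finset.sum_add_distrib,
    Finset.sum_ite_eq, Finset.sum_ite_eq, Finset.sum_ite_eq]
  simp only [Finset.mem_Icc]
  rw [if_pos ⟨hi1, hiN⟩]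
  by_cases hN : i < N
  · rw [if_pos ⟨by omega, by omega⟩]
    have t1 := hT i hi1 hiN
    have s1 := hS i hi1 hN
    have t2 := hT (i + 1) (by omega) (by omega)
    have e1 := hE i hN
    rw [show i + 1 - 1 = i from by omega] at t2
    by_cases h2 : 2 ≤ i
    · rw [if_pos ⟨by omega, by omega⟩]
      have s0 := hS (i - 1) (by omega) (by omega)
      rw [show i - 1 + 1 = i from by omega] at s0
      rw [key, hEm, e1]
      linear_combination t1 + s1 - t2 - s0
    · have hi : i = 1 := by omega
      rw [if_neg (by omega)]
      subst hi
      rw [key, hEm, e1]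
      simp only [show (1:ℕ) - 1 = 0 from rfl, hD0, hD1] at *
      linear_combination t1 + s1 - t2
  · -- i = N
    have hiN' : i = N := by omega
    rw [if_neg (by omega)]
    subst hiN'
    have t1 := hT i hi1 le_rfl
    rw [key, hEm, hdCcN, hdCpN, hwpN]
    by_cases h2 : 2 ≤ i
    · rw [if_pos ⟨by omega, by omega⟩]
      have s0 := hS (i - 1) (by omega) (by omega)
      rw [show i - 1 + 1 = i from by omega] at s0
      rw [hDN] at t1 ⊢
      linear_combination t1 - s0
    · have hi : i = 1 := by omega
      rw [if_neg (by omega)]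
      rw [show i - 1 = 0 from by omega, hD0, hDN]
      rw [hDN] at t1
      linear_combination t1
end
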